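/- arXiv:1607.02340 — 8 statements merged into one kernel-verified Lean document; each statement's English description precedes it below -/
import Mathlib

section
/- For any fixed p ∈ ℝ^n, if χ₁ is a corrector for (p, c₁) and χ₂ is a corrector for (p, c₂), then c₁ = c₂. Hence the constant c̄(|p|) for which a corrector exists is unique. -/
open Set Filter intervalIntegral
open scoped Topology

noncomputable section

/-- A corrector for `(p, c)`: a C² function `χ : ℝ → ℝ` with `χ' > 0`, `χ(z+1) = χ(z) + 1`,
satisfying `|p|²·χ''(z) − c·χ'(z) + g(χ(z)) = 0` for all `z ∈ ℝ`. -/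
def IsCorrector {n : ℕ} (g : ℝ → ℝ) (p : EuclideanSpace ℝ (Fin n)) (c : ℝ) (χ : ℝ → ℝ) : Prop :=
  ContDiff ℝ 2 χ ∧ (∀ z, 0 < deriv χ z) ∧ (∀ z, χ (z + 1) = χ z + 1) ∧
  ∀ z, ‖p‖ ^ 2 * deriv (deriv χ) z - c * deriv χ z + g (χ z) = 0

namespace CorrAux

lemma contDiff_deriv {χ : ℝ → ℝ} (h : ContDiff ℝ 2 χ) : ContDiff ℝ 1 (deriv χ) := by
  have h2 : ContDiff ℝ ((1:WithTop ℕ∞)+1) χ := by norm_num; exact h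
  exact (contDiff_succ_iff_deriv.mp h2).2.2

lemma deriv_per {χ : ℝ → ℝ} (hχ : ∀ z, χ (z + 1) = χ z + 1) (z : ℝ) :
    deriv χ (z + 1) = deriv χ z := by
  have he : (fun z => χ (z + 1)) = fun z => χ z + 1 := funext hχ
  calc deriv χ (z + 1) = deriv (fun z => χ (z + 1)) z := (deriv_comp_add_const χ 1 z).symm
    _ = deriv (fun z => χ z + 1) z := by rw [he]
    _ = deriv χ z := by simp

/-- A max point of a 1-periodic continuous function is a global max. -/
lemma global_max {f : ℝ → ℝ} (hc : Continuous f) (hp : Function.Periodic f 1) :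
    ∃ a, ∀ y, f y ≤ f a := by
  obtain ⟨a, _, hmax⟩ := isCompact_Icc.exists_isMaxOn (Set.nonempty_Icc.mpr zero_le_one)
    (hc.continuousOn (s := Icc 0 1))
  refine ⟨a, fun y => ?_⟩
  obtain ⟨y₀, hy₀, hval⟩ := hp.exists_mem_Ico₀ one_pos y
  rw [hval]
  exact hmax ⟨hy₀.1, hy₀.2.le⟩

lemma cpos {n : ℕ} {g : ℝ → ℝ} (hpos : ∀ y, 0 < g y) {p : EuclideanSpace ℝ (Fin n)}
    {c : ℝ} {χ : ℝ → ℝ} (h : IsCorrector g p c χ) : 0 < c := by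
  obtain ⟨hsm, hd, hadd, heq⟩ := h
  have hcd := contDiff_deriv hsm
  have hper : Function.Periodic (deriv χ) 1 := fun z => deriv_per hadd z
  obtain ⟨a, hmax⟩ := global_max hcd.continuous hper
  have hloc : IsLocalMax (deriv χ) a := Filter.Eventually.of_forall hmax
  have hda : HasDerivAt (deriv χ) (deriv (deriv χ) a) a :=
    ((hcd.differentiable one_ne_zero) a).hasDerivAt
  have h0 : deriv (deriv χ) a = 0 := hloc.hasDerivAt_eq_zero hda
  have := heq a
  rw [h0] at this
  have hg := hpos (χ a)
  have hdp := hd a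
  nlinarith

lemma pack {n : ℕ} {g : ℝ → ℝ} {p : EuclideanSpace ℝ (Fin n)}
    {c : ℝ} {χ : ℝ → ℝ} (h : IsCorrector g p c χ) :
    ∃ u : ℝ → ℝ, (∀ y, χ (u y) = y) ∧ (∀ y, u (y + 1) = u y + 1) ∧
      Continuous u ∧ (∀ y, HasDerivAt u (deriv χ (u y))⁻¹ y) := by
  obtain ⟨hsm, hd, hadd, heq⟩ := h
  have hdiff : Differentiable ℝ χ := hsm.differentiable two_ne_zero
  have hm : StrictMono χ := strictMono_of_deriv_pos hd
  -- surjectivity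
  have haddN : ∀ (m : ℕ) (z : ℝ), χ (z + m) = χ z + m := by
    intro m
    induction m with
    | zero => simp
    | succ k ih => intro z; push_cast; rw [← add_assoc, hadd, ih]; push_cast; ring
  have hsubN : ∀ (m : ℕ) (z : ℝ), χ (z - m) = χ z - m := by
    intro m z
    have := haddN m (z - m)
    simp at this
    linarith
  have hs : Function.Surjective χ := by
    intro y
    obtain ⟨N, hN⟩ := exists_nat_gt |y - χ 0|
    have h1 : χ (0 - (N:ℝ)) ≤ y := by
      rw [hsubN N 0]
      linarith [neg_abs_le (y - χ 0)]
    have h2 : y ≤ χ (0 + (N:ℝ)) := by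
      rw [haddN N 0]
      linarith [le_abs_self (y - χ 0)]
    have hle : (0:ℝ) - N ≤ 0 + N := by
      have : (0:ℝ) ≤ N := Nat.cast_nonneg N
      linarith
    obtain ⟨z, _, hz⟩ := intermediate_value_Icc hle (hdiff.continuous.continuousOn)
      (⟨h1, h2⟩ : y ∈ Icc (χ (0 - (N:ℝ))) (χ (0 + (N:ℝ))))
    exact ⟨z, hz⟩
  set e := StrictMono.orderIsoOfSurjective χ hm hs with he
  have hce : ∀ z, e z = χ z := fun z => rfl
  refine ⟨fun y => e.symm y, fun y => ?_, ?_, ?_, ?_⟩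
  · rw [← hce]; exact e.apply_symm_apply y
  · intro y
    apply hm.injective
    have h1 : χ (e.symm (y+1)) = y + 1 := by rw [← hce]; exact e.apply_symm_apply _
    have h2 : χ (e.symm y + 1) = y + 1 := by
      rw [hadd, ← hce]; rw [e.apply_symm_apply]
    rw [h1, h2]
  · exact e.symm.toHomeomorph.continuous
  · intro y
    refine HasDerivAt.of_local_left_inverse (e.symm.toHomeomorph.continuous.continuousAt)
      ((hdiff _).hasDerivAt) (ne_of_gt (hd _)) (Filter.Eventually.of_forall fun y' => ?_)
    rw [← hce]; exact e.apply_symm_apply y'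

end CorrAux

open CorrAux in
lemma key {n : ℕ} (g : ℝ → ℝ) (hpos : ∀ y, 0 < g y)
    (p : EuclideanSpace ℝ (Fin n)) (c₁ c₂ : ℝ) (χ₁ χ₂ : ℝ → ℝ)
    (h₁ : IsCorrector g p c₁ χ₁) (h₂ : IsCorrector g p c₂ χ₂) (hlt : c₂ < c₁) : False := by
  have hc₁ := cpos hpos h₁
  have hc₂ := cpos hpos h₂
  obtain ⟨u₁, hu₁inv, hu₁add, hu₁cont, hu₁d⟩ := pack h₁
  obtain ⟨u₂, hu₂inv, hu₂add, hu₂cont, hu₂d⟩ := pack h₂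
  set ψ₁ : ℝ → ℝ := fun y => deriv χ₁ (u₁ y) with hψ₁
  set ψ₂ : ℝ → ℝ := fun y => deriv χ₂ (u₂ y) with hψ₂
  have hψ₁pos : ∀ y, 0 < ψ₁ y := fun y => h₁.2.1 _
  have hψ₂pos : ∀ y, 0 < ψ₂ y := fun y => h₂.2.1 _
  -- ODE in y variable
  have heq₁ : ∀ y, ‖p‖ ^ 2 * deriv (deriv χ₁) (u₁ y) = c₁ * ψ₁ y - g y := by
    intro y; have := h₁.2.2.2 (u₁ y); rw [hu₁inv y] at this; linarith
  have heq₂ : ∀ y, ‖p‖ ^ 2 * deriv (deriv χ₂) (u₂ y) = c₂ * ψ₂ y - g y := by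
    intro y; have := h₂.2.2.2 (u₂ y); rw [hu₂inv y] at this; linarith
  -- derivatives of ψ
  have hcd₁ := contDiff_deriv h₁.1
  have hcd₂ := contDiff_deriv h₂.1
  have hψ₁d : ∀ y, HasDerivAt ψ₁ (deriv (deriv χ₁) (u₁ y) * (ψ₁ y)⁻¹) y := by
    intro y
    exact (((hcd₁.differentiable one_ne_zero) (u₁ y)).hasDerivAt).comp y (hu₁d y)
  have hψ₂d : ∀ y, HasDerivAt ψ₂ (deriv (deriv χ₂) (u₂ y) * (ψ₂ y)⁻¹) y := by
    intro y
    exact (((hcd₂.differentiable one_ne_zero) (u₂ y)).hasDerivAt).comp y (hu₂d y)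
  -- key comparison: ψ₁ < ψ₂ everywhere
  have hcomp : ∀ y, ψ₁ y < ψ₂ y := by
    by_cases hp : ‖p‖ ^ 2 = 0
    · intro y
      have e₁ := heq₁ y; have e₂ := heq₂ y
      rw [hp, zero_mul] at e₁ e₂
      have hg := hpos y
      have := hψ₁pos y; have := hψ₂pos y
      -- ψᵢ = g y / cᵢ
      nlinarith
    · have hp' : 0 < ‖p‖ ^ 2 := lt_of_le_of_ne (sq_nonneg _) (Ne.symm hp)
      set F : ℝ → ℝ := fun y => ψ₁ y ^ 2 - ψ₂ y ^ 2 with hF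
      have hFd : ∀ y, HasDerivAt F
          (2 * ψ₁ y ^ 1 * (deriv (deriv χ₁) (u₁ y) * (ψ₁ y)⁻¹)
            - 2 * ψ₂ y ^ 1 * (deriv (deriv χ₂) (u₂ y) * (ψ₂ y)⁻¹)) y := by
        intro y
        exact ((hψ₁d y).pow 2).sub ((hψ₂d y).pow 2)
      have hFcont : Continuous F := by
        rw [continuous_iff_continuousAt]
        exact fun y => ((hFd y).differentiableAt).continuousAt
      -- periodicity
      have hu₁per : ∀ y, ψ₁ (y + 1) = ψ₁ y := by
        intro y
        show deriv χ₁ (u₁ (y+1)) = deriv χ₁ (u₁ y)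
        rw [hu₁add y, deriv_per h₁.2.2.1]
      have hu₂per : ∀ y, ψ₂ (y + 1) = ψ₂ y := by
        intro y
        show deriv χ₂ (u₂ (y+1)) = deriv χ₂ (u₂ y)
        rw [hu₂add y, deriv_per h₂.2.2.1]
      have hFper : Function.Periodic F 1 := by
        intro y; show ψ₁ (y+1) ^ 2 - ψ₂ (y+1) ^ 2 = _; rw [hu₁per, hu₂per]
      obtain ⟨a, hmax⟩ := global_max hFcont hFper
      have hloc : IsLocalMax F a := Filter.Eventually.of_forall hmax
      have hzero := hloc.hasDerivAt_eq_zero (hFd a)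
      -- deduce c₁ ψ₁ a = c₂ ψ₂ a
      have hA : deriv (deriv χ₁) (u₁ a) = deriv (deriv χ₂) (u₂ a) := by
        have h1 := hψ₁pos a; have h2 := hψ₂pos a
        field_simp at hzero
        have hne : (2 * ψ₁ a * ψ₂ a) ≠ 0 := by positivity
        apply mul_left_cancel₀ hne
        linear_combination (ψ₁ a * ψ₂ a) * hzero
      have hcc : c₁ * ψ₁ a = c₂ * ψ₂ a := by
        have e₁ := heq₁ a; have e₂ := heq₂ a
        rw [hA] at e₁
        linarith
      have hlt' : ψ₁ a < ψ₂ a := by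
        have h1 := hψ₁pos a; have h2 := hψ₂pos a
        nlinarith
      have hFa : F a < 0 := by
        have h1 := hψ₁pos a; have h2 := hψ₂pos a
        simp only [hF]
        nlinarith
      intro y
      have := le_trans (hmax y) hFa.le
      have h1 := hψ₁pos y; have h2 := hψ₂pos y
      by_contra hcon
      push_neg at hcon
      have : ψ₁ y ^ 2 - ψ₂ y ^ 2 < 0 := lt_of_le_of_lt (hmax y) hFa
      nlinarith
  -- final contradiction: ρ = u₁ - u₂ is 1-periodic yet strictly monotone
  set ρ : ℝ → ℝ := fun y => u₁ y - u₂ y with hρ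
  have hρd : ∀ y, HasDerivAt ρ ((ψ₁ y)⁻¹ - (ψ₂ y)⁻¹) y := fun y => (hu₁d y).sub (hu₂d y)
  have hmono : StrictMono ρ := by
    apply strictMono_of_deriv_pos
    intro y
    rw [(hρd y).deriv]
    have h1 := hψ₁pos y; have h2 := hψ₂pos y; have h3 := hcomp y
    have : (ψ₂ y)⁻¹ < (ψ₁ y)⁻¹ := by
      exact inv_strictAnti₀ h1 h3
    linarith
  have : ρ 0 < ρ 1 := hmono zero_lt_one
  have hper : ρ (0 + 1) = ρ 0 := by
    simp only [hρ]
    rw [hu₁add, hu₂add]; ring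
  norm_num at hper
  linarith

theorem statement_2 {n : ℕ} (g : ℝ → ℝ) (hg : ∃ K, LipschitzWith K g)
    (hper : ∀ y, g (y + 1) = g y) (hpos : ∀ y, 0 < g y)
    (p : EuclideanSpace ℝ (Fin n)) (c₁ c₂ : ℝ) (χ₁ χ₂ : ℝ → ℝ)
    (h₁ : IsCorrector g p c₁ χ₁) (h₂ : IsCorrector g p c₂ χ₂) :
    c₁ = c₂ := by
  rcases lt_trichotomy c₁ c₂ with h | h | h
  · exact absurd (key g hpos p c₂ c₁ χ₂ χ₁ h₂ h₁ h) id
  · exact h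
  · exact absurd (key g hpos p c₁ c₂ χ₁ χ₂ h₁ h₂ h) id
end
end

section
/- If p ∈ ℝ^n, p ≠ 0, and χ is a corrector for (p, c), then c = ∫₀¹ g(χ(z)) dz and c·∫₀¹ (χ'(z))² dz = ∫₀¹ g(s) ds; in particular c = (∫₀¹ g(s) ds)/(∫₀¹ (χ'(z))² dz). -/
open Set Filter intervalIntegral
open scoped Topology

noncomputable section

theorem statement_3 {n : ℕ} (g : ℝ → ℝ) (hg : ∃ K, LipschitzWith K g)
    (hper : ∀ y, g (y + 1) = g y) (hpos : ∀ y, 0 < g y)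
    (p : EuclideanSpace ℝ (Fin n)) (hp : p ≠ 0) (c : ℝ) (χ : ℝ → ℝ)
    (hχ : IsCorrector g p c χ) :
    c = (∫ z in (0:ℝ)..1, g (χ z)) ∧
    c * (∫ z in (0:ℝ)..1, (deriv χ z) ^ 2) = (∫ s in (0:ℝ)..1, g s) ∧
    c = (∫ s in (0:ℝ)..1, g s) / (∫ z in (0:ℝ)..1, (deriv χ z) ^ 2) := by
  obtain ⟨hC2, hd, hper1, hode⟩ := hχ
  obtain ⟨K, hK⟩ := hg
  have hgc : Continuous g := hK.continuous
  have hχd : Differentiable ℝ χ := hC2.differentiable (by norm_num)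
  have hC2' : ContDiff ℝ 1 (deriv χ) := ((contDiff_succ_iff_deriv.mp (show ContDiff ℝ ((1:ℕ) + 1) χ by exact_mod_cast hC2)).2).2
  have hχd2 : Differentiable ℝ (deriv χ) := hC2'.differentiable (by norm_num)
  have hcont1 : Continuous (deriv χ) := hχd2.continuous
  have hcont2 : Continuous (deriv (deriv χ)) := hC2'.continuous_deriv le_rfl
  -- deriv χ is 1-periodic
  have hdper : ∀ z, deriv χ (z + 1) = deriv χ z := by
    intro z
    have h1 : (fun y => χ (y + 1)) = fun y => χ y + 1 := funext fun y => hper1 y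
    have h2 : deriv (fun y => χ (y + 1)) z = deriv χ (z + 1) := by
      simpa using deriv_comp_add_const χ 1 z
    have h3 : deriv (fun y => χ y + 1) z = deriv χ z := by
      simp
    rw [← h2, h1, h3]
  -- ∫ χ'' = 0
  have hA : (∫ z in (0:ℝ)..1, deriv (deriv χ) z) = 0 := by
    rw [integral_deriv_eq_sub (fun x _ => hχd2 x)
      (hcont2.intervalIntegrable 0 1)]
    have := hdper 0
    simp at this ⊢
    linarith
  -- ∫ χ' = 1
  have hB : (∫ z in (0:ℝ)..1, deriv χ z) = 1 := by
    rw [integral_deriv_eq_sub (fun x _ => hχd x)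
      (hcont1.intervalIntegrable 0 1)]
    have := hper1 0
    simp at this ⊢
    linarith
  -- first claim
  have int1 : IntervalIntegrable (fun z => c * deriv χ z) MeasureTheory.volume 0 1 :=
    ((continuous_const.mul hcont1)).intervalIntegrable 0 1
  have int2 : IntervalIntegrable (fun z => ‖p‖ ^ 2 * deriv (deriv χ) z)
      MeasureTheory.volume 0 1 := (continuous_const.mul hcont2).intervalIntegrable 0 1
  have hfirst : c = (∫ z in (0:ℝ)..1, g (χ z)) := by
    have h1 : (∫ z in (0:ℝ)..1, g (χ z)) =
        ∫ z in (0:ℝ)..1, (c * deriv χ z - ‖p‖ ^ 2 * deriv (deriv χ) z) :=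
      integral_congr fun z _ => by have := hode z; linarith
    rw [h1, integral_sub int1 int2, integral_const_mul, integral_const_mul, hA, hB]
    ring
  -- ∫ χ''·χ' = 0
  have hC : (∫ z in (0:ℝ)..1, deriv χ z * deriv (deriv χ) z) = 0 := by
    have hderF : ∀ z ∈ uIcc (0:ℝ) 1, HasDerivAt (fun z => deriv χ z * deriv χ z / 2)
        (deriv χ z * deriv (deriv χ) z) z := by
      intro z _
      have := (((hχd2 z).hasDerivAt.mul (hχd2 z).hasDerivAt).div_const 2)
      refine this.congr_deriv ?_
      ring
    rw [integral_eq_sub_of_hasDerivAt hderF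
      ((hcont1.mul hcont2).intervalIntegrable 0 1)]
    have := hdper 0
    simp at this ⊢
    rw [this]
    ring
  -- substitution: ∫ g(χ)·χ' = ∫₀¹ g
  have hsubst : (∫ z in (0:ℝ)..1, deriv χ z * g (χ z)) = ∫ s in (0:ℝ)..1, g s := by
    have h1 : (∫ z in (0:ℝ)..1, deriv χ z • (g ∘ χ) z) = ∫ s in (χ 0)..(χ 1), g s :=
      integral_comp_smul_deriv (fun x _ => (hχd x).hasDerivAt)
        (hcont1.continuousOn) hgc
    have h2 : (∫ s in (χ 0)..(χ 1), g s) = ∫ s in (0:ℝ)..1, g s := by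
      have hgper : Function.Periodic g 1 := hper
      have := hgper.intervalIntegral_add_eq (χ 0) 0
      have hχ1 : χ 1 = χ 0 + 1 := by simpa using hper1 0
      rw [hχ1]
      simpa using this
    rw [← h2, ← h1]
    rfl
  have hsecond : c * (∫ z in (0:ℝ)..1, (deriv χ z) ^ 2) = (∫ s in (0:ℝ)..1, g s) := by
    have h1 : (∫ z in (0:ℝ)..1, deriv χ z * g (χ z)) =
        ∫ z in (0:ℝ)..1, (c * (deriv χ z) ^ 2 - ‖p‖ ^ 2 * (deriv χ z * deriv (deriv χ) z)) :=
      integral_congr fun z _ => by have := hode z; nlinarith [hd z]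
    have int3 : IntervalIntegrable (fun z => c * (deriv χ z) ^ 2) MeasureTheory.volume 0 1 :=
      (continuous_const.mul (hcont1.pow 2)).intervalIntegrable 0 1
    have int4 : IntervalIntegrable (fun z => ‖p‖ ^ 2 * (deriv χ z * deriv (deriv χ) z))
        MeasureTheory.volume 0 1 :=
      (continuous_const.mul (hcont1.mul hcont2)).intervalIntegrable 0 1
    rw [← hsubst, h1, integral_sub int3 int4, integral_const_mul, integral_const_mul, hC]
    ring
  have hJ : 0 < ∫ z in (0:ℝ)..1, (deriv χ z) ^ 2 :=
    intervalIntegral_pos_of_pos ((hcont1.pow 2).intervalIntegrable 0 1)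
      (fun x => pow_pos (hd x) 2) one_pos
  refine ⟨hfirst, hsecond, ?_⟩
  field_simp [ne_of_gt hJ]
  linarith [hsecond]
end
end

section
/- If χ is a corrector for (p, c) for some p ∈ ℝ^n, then (∫₀¹ 1/g(s) ds)⁻¹ ≤ c ≤ ∫₀¹ g(s) ds and c ≥ min g > 0; moreover, if g is nonconstant and p ≠ 0, then the strict inequality c < ∫₀¹ g(s) ds holds. -/
open Set Filter intervalIntegral
open scoped Topology

noncomputable section

theorem statement_4 {n : ℕ} (g : ℝ → ℝ) (hg : ∃ K, LipschitzWith K g)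
    (hper : ∀ y, g (y + 1) = g y) (hpos : ∀ y, 0 < g y)
    (m M : ℝ) (hm : IsLeast (Set.range g) m) (hM : IsGreatest (Set.range g) M)
    (p : EuclideanSpace ℝ (Fin n)) (c : ℝ) (χ : ℝ → ℝ)
    (hχ : IsCorrector g p c χ) :
    (∫ s in (0:ℝ)..1, (g s)⁻¹)⁻¹ ≤ c ∧ c ≤ (∫ s in (0:ℝ)..1, g s) ∧
    m ≤ c ∧ 0 < m ∧
    ((∃ y₁ y₂, g y₁ ≠ g y₂) → p ≠ 0 → c < ∫ s in (0:ℝ)..1, g s) := by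
  obtain ⟨K, hK⟩ := hg
  obtain ⟨hC2, hDpos, hp1, hode⟩ := hχ
  have hgc : Continuous g := hK.continuous
  have hgper : Function.Periodic g 1 := hper
  have hgne : ∀ y, g y ≠ 0 := fun y => (hpos y).ne'
  -- smoothness facts
  have hC2' : ContDiff ℝ (1 + 1) χ := by
    have : ((1 : WithTop ℕ∞) + 1) = 2 := by norm_num
    rwa [this]
  have h2 := contDiff_succ_iff_deriv.mp hC2'
  have hχdiff : Differentiable ℝ χ := h2.1
  have hD1 : ContDiff ℝ 1 (deriv χ) := h2.2.2
  have hDdiff : Differentiable ℝ (deriv χ) := (contDiff_one_iff_deriv.mp hD1).1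
  have hD2c : Continuous (deriv (deriv χ)) := (contDiff_one_iff_deriv.mp hD1).2
  have hDc : Continuous (deriv χ) := hDdiff.continuous
  have hχc : Continuous χ := hχdiff.continuous
  have hDne : ∀ z, deriv χ z ≠ 0 := fun z => (hDpos z).ne'
  have hD2dD : Continuous fun z => deriv (deriv χ) z / deriv χ z := hD2c.div hDc hDne
  -- periodicity of deriv χ
  have hDper : ∀ z, deriv χ (z + 1) = deriv χ z := by
    intro z
    have h1 : deriv (fun w => χ (w + 1)) z = deriv (fun w => χ w + 1) z := by
      congr 1; funext w; exact hp1 w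
    rw [deriv_comp_add_const, deriv_add_const] at h1
    exact h1
  -- basic integrals
  have hID2 : ∫ z in (0:ℝ)..1, deriv (deriv χ) z = 0 := by
    rw [integral_deriv_eq_sub (fun x _ => hDdiff x) (hD2c.intervalIntegrable 0 1)]
    have := hDper 0
    rw [zero_add] at this
    rw [this, sub_self]
  have hID : ∫ z in (0:ℝ)..1, deriv χ z = 1 := by
    rw [integral_deriv_eq_sub (fun x _ => hχdiff x) (hDc.intervalIntegrable 0 1)]
    have := hp1 0
    rw [zero_add] at this
    rw [this]; ring
  have hIlog : ∫ z in (0:ℝ)..1, deriv (deriv χ) z / deriv χ z = 0 := by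
    rw [integral_eq_sub_of_hasDerivAt
      (f := fun w => Real.log (deriv χ w))
      (fun x _ => ((hDdiff x).hasDerivAt).log (hDne x))
      (hD2dD.intervalIntegrable 0 1)]
    have := hDper 0
    rw [zero_add] at this
    rw [this, sub_self]
  -- continuity of composites
  have hgχ : Continuous fun z => g (χ z) := hgc.comp hχc
  have hgχD : Continuous fun z => g (χ z) * deriv χ z := hgχ.mul hDc
  have hgχdD : Continuous fun z => g (χ z) / deriv χ z := hgχ.div hDc hDne
  have hginv : Continuous fun s => (g s)⁻¹ := hgc.inv₀ hgne
  have hginvχD : Continuous fun z => (g (χ z))⁻¹ * deriv χ z :=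
    (hginv.comp hχc).mul hDc
  -- key identity 1 : c = ∫ g(χ)
  have hI1 : ∫ z in (0:ℝ)..1, g (χ z) = c := by
    have heq : (fun z => g (χ z)) =
        fun z => c * deriv χ z - ‖p‖ ^ 2 * deriv (deriv χ) z := by
      funext z; have := hode z; linarith
    rw [heq, integral_sub (f := fun z => c * deriv χ z)
      (g := fun z => ‖p‖ ^ 2 * deriv (deriv χ) z) ((continuous_const.mul hDc).intervalIntegrable 0 1)
      ((continuous_const.mul hD2c).intervalIntegrable 0 1),
      intervalIntegral.integral_const_mul, intervalIntegral.integral_const_mul, hID, hID2]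
    ring
  -- key identity 2 : c = ∫ g(χ)/χ'
  have hI2 : ∫ z in (0:ℝ)..1, g (χ z) / deriv χ z = c := by
    have heq : (fun z => g (χ z) / deriv χ z) =
        fun z => c - ‖p‖ ^ 2 * (deriv (deriv χ) z / deriv χ z) := by
      funext z
      have h := hode z
      have hd := hDne z
      field_simp
      linarith
    rw [heq, integral_sub (f := fun _ => c)
      (g := fun z => ‖p‖ ^ 2 * (deriv (deriv χ) z / deriv χ z)) (intervalIntegrable_const)
      ((continuous_const.mul hD2dD).intervalIntegrable 0 1),
      intervalIntegral.integral_const_mul, hIlog, integral_const]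
    simp
  -- change of variables
  have hχ1 : χ (1:ℝ) = χ 0 + 1 := by
    have := hp1 0; rwa [zero_add] at this
  have hCV : ∫ z in (0:ℝ)..1, g (χ z) * deriv χ z = ∫ s in (0:ℝ)..1, g s := by
    have h := integral_comp_mul_deriv (a := (0:ℝ)) (b := 1)
      (fun x _ => (hχdiff x).hasDerivAt) hDc.continuousOn hgc
    rw [hχ1] at h
    rw [hgper.intervalIntegral_add_eq (χ 0) 0, zero_add] at h
    simpa [Function.comp] using h
  have hCVinv : ∫ z in (0:ℝ)..1, (g (χ z))⁻¹ * deriv χ z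
      = ∫ s in (0:ℝ)..1, (g s)⁻¹ := by
    have hperinv : Function.Periodic (fun s => (g s)⁻¹) 1 := fun y => by
      simp [hper y]
    have h := integral_comp_mul_deriv (a := (0:ℝ)) (b := 1)
      (g := fun s => (g s)⁻¹) (fun x _ => (hχdiff x).hasDerivAt) hDc.continuousOn hginv
    rw [hχ1] at h
    rw [hperinv.intervalIntegral_add_eq (χ 0) 0, zero_add] at h
    simpa [Function.comp] using h
  -- m ≤ c and 0 < m
  obtain ⟨y0, hy0⟩ := hm.1
  have hmpos : 0 < m := hy0 ▸ hpos y0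
  have hmc : m ≤ c := by
    rw [← hI1]
    have : m = ∫ _ in (0:ℝ)..1, m := by simp
    rw [this]
    exact integral_mono_on (by norm_num) intervalIntegrable_const
      (hgχ.intervalIntegrable 0 1) (fun x _ => hm.2 (Set.mem_range_self (χ x)))
  have hcpos : 0 < c := hmpos.trans_le hmc
  -- pointwise AM-GM key for upper bound
  have hsum : ∀ z : ℝ, 2 ≤ deriv χ z + (deriv χ z)⁻¹ := by
    intro z
    have hd := hDpos z
    rw [← sub_nonneg]
    have heq : deriv χ z + (deriv χ z)⁻¹ - 2 = (deriv χ z - 1) ^ 2 / deriv χ z := by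
      field_simp; ring
    rw [heq]; positivity
  have key : ∀ z : ℝ, g (χ z) ≤ (g (χ z) * deriv χ z + g (χ z) / deriv χ z) / 2 := by
    intro z
    have ha := hpos (χ z)
    calc g (χ z) = g (χ z) * 2 / 2 := by ring
    _ ≤ g (χ z) * (deriv χ z + (deriv χ z)⁻¹) / 2 := by
        gcongr
        exact hsum z
    _ = (g (χ z) * deriv χ z + g (χ z) / deriv χ z) / 2 := by
        rw [div_eq_mul_inv]; ring
  have hrhs : ∫ z in (0:ℝ)..1, (g (χ z) * deriv χ z + g (χ z) / deriv χ z) / 2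
      = ((∫ s in (0:ℝ)..1, g s) + c) / 2 := by
    rw [integral_div, integral_add (hgχD.intervalIntegrable 0 1)
      (hgχdD.intervalIntegrable 0 1), hCV, hI2]
  have hupper : c ≤ ∫ s in (0:ℝ)..1, g s := by
    have hmono : (∫ z in (0:ℝ)..1, g (χ z)) ≤
        ∫ z in (0:ℝ)..1, (g (χ z) * deriv χ z + g (χ z) / deriv χ z) / 2 :=
      integral_mono_on (by norm_num) (hgχ.intervalIntegrable 0 1)
        (((hgχD.add hgχdD).div_const 2).intervalIntegrable 0 1) (fun x _ => key x)
    rw [hI1, hrhs] at hmono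
    linarith
  -- lower bound
  set A := ∫ s in (0:ℝ)..1, (g s)⁻¹ with hAdef
  have hApos : 0 < A :=
    intervalIntegral_pos_of_pos_on (hginv.intervalIntegrable 0 1)
      (fun x _ => inv_pos.2 (hpos x)) (by norm_num)
  have hkey2 : ∀ z : ℝ, 2 ≤ A⁻¹ * ((g (χ z))⁻¹ * deriv χ z)
      + A * (g (χ z) / deriv χ z) := by
    intro z
    have ha := hpos (χ z)
    have hd := hDpos z
    set u := A⁻¹ * ((g (χ z))⁻¹ * deriv χ z) with hudef
    set v := A * (g (χ z) / deriv χ z) with hvdef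
    have hu : 0 < u := by
      rw [hudef]; positivity
    have huv : u * v = 1 := by
      rw [hudef, hvdef]
      field_simp
    nlinarith [sq_nonneg (u - 1), hu, huv]
  have hlower : A⁻¹ ≤ c := by
    have hint : ∫ z in (0:ℝ)..1, (A⁻¹ * ((g (χ z))⁻¹ * deriv χ z)
        + A * (g (χ z) / deriv χ z)) = A⁻¹ * A + A * c := by
      rw [integral_add (f := fun z => A⁻¹ * ((g (χ z))⁻¹ * deriv χ z))
        (g := fun z => A * (g (χ z) / deriv χ z))
        ((continuous_const.mul hginvχD).intervalIntegrable 0 1)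
        ((continuous_const.mul hgχdD).intervalIntegrable 0 1),
        intervalIntegral.integral_const_mul, intervalIntegral.integral_const_mul, hCVinv, hI2]
    have hmono : (∫ _ in (0:ℝ)..1, (2:ℝ)) ≤
        ∫ z in (0:ℝ)..1, (A⁻¹ * ((g (χ z))⁻¹ * deriv χ z)
          + A * (g (χ z) / deriv χ z)) :=
      integral_mono_on (by norm_num) intervalIntegrable_const
        (((continuous_const.mul hginvχD).add (continuous_const.mul hgχdD)).intervalIntegrable 0 1)
        (fun x _ => hkey2 x)
    rw [hint, inv_mul_cancel₀ hApos.ne'] at hmono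
    simp only [integral_const, smul_eq_mul, sub_zero, mul_one, one_mul] at hmono
    rw [inv_eq_one_div, div_le_iff₀ hApos]
    nlinarith
  refine ⟨hlower, hupper, hmc, hmpos, ?_⟩
  -- strict inequality
  rintro ⟨y₁, y₂, hy⟩ -
  by_cases hone : ∀ z ∈ Ioo (0:ℝ) 1, deriv χ z = 1
  · -- then g is constant, contradiction
    exfalso
    have hD2zero : ∀ z ∈ Ioo (0:ℝ) 1, deriv (deriv χ) z = 0 := by
      intro z hz
      have hloc : deriv χ =ᶠ[𝓝 z] fun _ => (1:ℝ) := by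
        filter_upwards [Ioo_mem_nhds hz.1 hz.2] with w hw using hone w hw
      rw [hloc.deriv_eq, deriv_const]
    have hgc_eq : ∀ z ∈ Ioo (0:ℝ) 1, g (χ z) = c := by
      intro z hz
      have h := hode z
      rw [hD2zero z hz, hone z hz] at h
      linarith
    have hone' : ∀ z ∈ Icc (0:ℝ) 1, deriv χ z = 1 := by
      have hclosed : IsClosed {z : ℝ | deriv χ z = 1} :=
        isClosed_eq hDc continuous_const
      intro z hz
      have hsub : closure (Ioo (0:ℝ) 1) ⊆ {z : ℝ | deriv χ z = 1} :=
        closure_minimal (fun w hw => hone w hw) hclosed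
      have : z ∈ closure (Ioo (0:ℝ) 1) := by
        rw [closure_Ioo (by norm_num : (0:ℝ) ≠ 1)]; exact hz
      exact hsub this
    have hχlin : ∀ z ∈ Icc (0:ℝ) 1, χ z = χ 0 + z := by
      intro z hz
      have h1 : ∫ w in (0:ℝ)..z, deriv χ w = χ z - χ 0 :=
        integral_deriv_eq_sub (fun x _ => hχdiff x) (hDc.intervalIntegrable 0 z)
      have h2 : ∫ w in (0:ℝ)..z, deriv χ w = ∫ w in (0:ℝ)..z, (1:ℝ) := by
        apply integral_congr
        intro w hw
        apply hone'
        rw [uIcc_of_le hz.1] at hw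
        exact ⟨hw.1, hw.2.trans hz.2⟩
      rw [h2] at h1
      simp at h1
      linarith
    have hgon : ∀ y ∈ Ioo (χ 0) (χ 0 + 1), g y = c := by
      intro y hy'
      have hz : y - χ 0 ∈ Ioo (0:ℝ) 1 := ⟨by linarith [hy'.1], by linarith [hy'.2]⟩
      have h := hgc_eq _ hz
      rw [hχlin _ (Ioo_subset_Icc_self hz)] at h
      rwa [add_sub_cancel] at h
    have hgon' : ∀ y ∈ Icc (χ 0) (χ 0 + 1), g y = c := by
      have hclosed : IsClosed {y : ℝ | g y = c} := isClosed_eq hgc continuous_const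
      intro y hy'
      have hsub : closure (Ioo (χ 0) (χ 0 + 1)) ⊆ {y : ℝ | g y = c} :=
        closure_minimal (fun w hw => hgon w hw) hclosed
      have : y ∈ closure (Ioo (χ 0) (χ 0 + 1)) := by
        rw [closure_Ioo (by linarith : χ 0 ≠ χ 0 + 1)]; exact hy'
      exact hsub this
    have hgall : ∀ y, g y = c := by
      intro y
      set k : ℤ := ⌈χ 0 - y⌉ with hk
      have h1 : χ 0 - y ≤ (k : ℝ) := Int.le_ceil _
      have h2 : (k : ℝ) < χ 0 - y + 1 := Int.ceil_lt_add_one _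
      have hmem : y + (k : ℝ) ∈ Icc (χ 0) (χ 0 + 1) := ⟨by linarith, by linarith⟩
      have hper' : g (y + (k : ℝ) * 1) = g y := (hgper.int_mul k) y
      rw [mul_one] at hper'
      rw [← hper']
      exact hgon' _ hmem
    exact hy (by rw [hgall y₁, hgall y₂])
  · push_neg at hone
    obtain ⟨z₀, hz₀, hz₀ne⟩ := hone
    have hstrictpt : g (χ z₀) <
        (g (χ z₀) * deriv χ z₀ + g (χ z₀) / deriv χ z₀) / 2 := by
      have ha := hpos (χ z₀)
      have hd := hDpos z₀
      have hne1 : deriv χ z₀ - 1 ≠ 0 := sub_ne_zero_of_ne hz₀ne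
      have hsum' : 2 < deriv χ z₀ + (deriv χ z₀)⁻¹ := by
        rw [← sub_pos]
        have heq : deriv χ z₀ + (deriv χ z₀)⁻¹ - 2
            = (deriv χ z₀ - 1) ^ 2 / deriv χ z₀ := by
          field_simp; ring
        rw [heq]; positivity
      calc g (χ z₀) = g (χ z₀) * 2 / 2 := by ring
      _ < g (χ z₀) * (deriv χ z₀ + (deriv χ z₀)⁻¹) / 2 := by
          gcongr
      _ = (g (χ z₀) * deriv χ z₀ + g (χ z₀) / deriv χ z₀) / 2 := by
          rw [div_eq_mul_inv]; ring
    have hstrict : (∫ z in (0:ℝ)..1, g (χ z)) <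
        ∫ z in (0:ℝ)..1, (g (χ z) * deriv χ z + g (χ z) / deriv χ z) / 2 := by
      apply integral_lt_integral_of_continuousOn_of_le_of_exists_lt (by norm_num)
        hgχ.continuousOn ((hgχD.add hgχdD).div_const 2).continuousOn
        (fun x _ => key x)
      exact ⟨z₀, Ioo_subset_Icc_self hz₀, hstrictpt⟩
    rw [hI1, hrhs] at hstrict
    linarith
end
end

section
/- As |p| → 0 one has c̄(|p|) → (∫₀¹ 1/g(s) ds)⁻¹, and the correctors χ_p normalized by χ_p(0) = 0 converge uniformly on ℝ to χ₀, the unique increasing solution of c̄(0)·χ₀'(z) = g(χ₀(z)) with χ₀(0) = 0, χ₀(1) = 1. -/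
open Set Filter intervalIntegral
open scoped Topology

noncomputable section

lemma chi_int (χ : ℝ → ℝ) (h : ∀ z, χ (z + 1) = χ z + 1) : ∀ (z : ℝ) (k : ℤ), χ (z + k) = χ z + k := by
  intro z k
  induction k using Int.induction_on with
  | zero => simp
  | succ n ih =>
      have : (z + ((n:ℝ) + 1)) = (z + n) + 1 := by ring
      push_cast at ih ⊢
      rw [this, h, ih]
      ring
  | pred n ih =>
      have h2 := h (z + (-(n:ℝ) - 1))
      have : (z + (-(n:ℝ) - 1) + 1) = z + (-n) := by ring
      rw [this] at h2
      push_cast at ih ⊢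
      rw [ih] at h2
      linarith

lemma per_bounds (f : ℝ → ℝ) (hf : Continuous f) (hp : Function.Periodic f 1) :
    ∃ m M : ℝ, (∃ x₀, f x₀ = m) ∧ ∀ x, m ≤ f x ∧ f x ≤ M := by
  obtain ⟨a, ha, hmin⟩ := isCompact_Icc.exists_isMinOn (α := ℝ) (s := Icc (0:ℝ) 1)
    (nonempty_Icc.2 zero_le_one) hf.continuousOn
  obtain ⟨b, hb, hmax⟩ := isCompact_Icc.exists_isMaxOn (α := ℝ) (s := Icc (0:ℝ) 1)
    (nonempty_Icc.2 zero_le_one) hf.continuousOn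
  refine ⟨f a, f b, ⟨a, rfl⟩, fun x => ?_⟩
  obtain ⟨y, hy, hxy⟩ := hp.exists_mem_Ico₀ one_pos x
  have hy' : y ∈ Icc (0:ℝ) 1 := ⟨hy.1, hy.2.le⟩
  exact ⟨hxy ▸ hmin hy', hxy ▸ hmax hy'⟩

lemma derivs {χ : ℝ → ℝ} (hχ : ContDiff ℝ 2 χ) :
    Differentiable ℝ χ ∧ Differentiable ℝ (deriv χ) ∧ Continuous (deriv (deriv χ)) := by
  have h1 : Differentiable ℝ χ := hχ.differentiable (by norm_num)
  have h2 : Differentiable ℝ (deriv χ) := by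
    have := hχ.differentiable_iteratedDeriv 1 (by norm_num)
    rwa [iteratedDeriv_one] at this
  have h3 : Continuous (deriv (deriv χ)) := by
    have := hχ.continuous_iteratedDeriv 2 (le_refl _)
    rwa [iteratedDeriv_succ, iteratedDeriv_one] at this
  exact ⟨h1, h2, h3⟩

lemma deriv_per {χ : ℝ → ℝ} (hχ : Differentiable ℝ χ)
    (hp1 : ∀ z, χ (z + 1) = χ z + 1) (z : ℝ) : deriv χ (z + 1) = deriv χ z := by
  have h1 : deriv (fun z => χ (z + 1)) z = deriv χ (z + 1) := deriv_comp_add_const χ 1 z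
  have h2 : (fun z => χ (z + 1)) = fun z => χ z + 1 := funext hp1
  rw [h2] at h1
  rw [← h1, deriv_add_const]

lemma key_id {g χ : ℝ → ℝ} {c ε : ℝ} (hε : 0 < ε) (hgc : Continuous g)
    (hχ : ContDiff ℝ 2 χ)
    (hode : ∀ z, ε * deriv (deriv χ) z - c * deriv χ z + g (χ z) = 0) (w z : ℝ) :
    deriv χ w = Real.exp (-(c/ε*z)) * deriv χ (w+z)
      + ε⁻¹ * ∫ s in (0:ℝ)..z, Real.exp (-(c/ε*s)) * g (χ (w+s)) := by
  obtain ⟨h1, h2, h3⟩ := derivs hχ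
  set a := c/ε with ha
  set φ : ℝ → ℝ := fun t => Real.exp (-(a*t)) * deriv χ (w+t)
      + ε⁻¹ * ∫ s in (0:ℝ)..t, Real.exp (-(a*s)) * g (χ (w+s)) with hφ
  have hGc : Continuous (fun s => Real.exp (-(a*s)) * g (χ (w+s))) := by
    exact (Real.continuous_exp.comp (by continuity)).mul (hgc.comp (h1.continuous.comp (by continuity)))
  have hder : ∀ t, HasDerivAt φ 0 t := by
    intro t
    have hA : HasDerivAt (fun t : ℝ => Real.exp (-(a*t))) (Real.exp (-(a*t)) * (-a)) t := by
      have : HasDerivAt (fun t : ℝ => -(a*t)) (-a) t := by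
        exact (((hasDerivAt_id t).const_mul a).neg).congr_deriv (by ring)
      exact this.exp
    have hB : HasDerivAt (fun t : ℝ => deriv χ (w+t)) (deriv (deriv χ) (w+t)) t :=
      HasDerivAt.comp_const_add w t ((h2 (w+t)).hasDerivAt)
    have hC : HasDerivAt (fun t : ℝ => ∫ s in (0:ℝ)..t, Real.exp (-(a*s)) * g (χ (w+s)))
        (Real.exp (-(a*t)) * g (χ (w+t))) t := by
      exact intervalIntegral.integral_hasDerivAt_right (hGc.intervalIntegrable _ _)
        hGc.aestronglyMeasurable.stronglyMeasurableAtFilter hGc.continuousAt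
    have := (hA.mul hB).add (hC.const_mul ε⁻¹)
    refine this.congr_deriv ?_
    have hode' := hode (w+t)
    have : deriv (deriv χ) (w+t) = (c * deriv χ (w+t) - g (χ (w+t))) / ε := by
      field_simp at hode' ⊢
      linarith
    rw [this, ha]
    field_simp
    ring
  have hconst : ∀ t, φ t = φ 0 := by
    intro t
    have : Differentiable ℝ φ := fun t => (hder t).differentiableAt
    exact is_const_of_deriv_eq_zero this (fun t => (hder t).deriv) t 0
  have h0 : φ 0 = deriv χ w := by
    simp [hφ]
  have hz := hconst z
  rw [h0] at hz
  simpa [hφ] using hz.symm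

lemma int_exp {a : ℝ} (ha : a ≠ 0) (z : ℝ) :
    ∫ s in (0:ℝ)..z, Real.exp (-(a*s)) = (1 - Real.exp (-(a*z)))/a := by
  have hd : ∀ x ∈ uIcc (0:ℝ) z, HasDerivAt (fun s => -(Real.exp (-(a*s)))/a) (Real.exp (-(a*x))) x := by
    intro x _
    have h : HasDerivAt (fun s : ℝ => -(a*s)) (-a) x := by
      exact (((hasDerivAt_id x).const_mul a).neg).congr_deriv (by ring)
    have := (h.exp.neg).div_const a
    exact this.congr_deriv (by field_simp)
  rw [intervalIntegral.integral_eq_sub_of_hasDerivAt hd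
    (((Real.continuous_exp.comp (by continuity)).intervalIntegrable _ _))]
  field_simp
  simp only [mul_zero, neg_zero, Real.exp_zero]
  ring

lemma int_s_exp {a : ℝ} (ha : a ≠ 0) (z : ℝ) :
    ∫ s in (0:ℝ)..z, s * Real.exp (-(a*s))
      = 1/a^2 - (z/a + 1/a^2) * Real.exp (-(a*z)) := by
  have hd : ∀ x ∈ uIcc (0:ℝ) z,
      HasDerivAt (fun s => -((s/a + 1/a^2) * Real.exp (-(a*s)))) (x * Real.exp (-(a*x))) x := by
    intro x _
    have h : HasDerivAt (fun s : ℝ => -(a*s)) (-a) x := by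
      exact (((hasDerivAt_id x).const_mul a).neg).congr_deriv (by ring)
    have hlin : HasDerivAt (fun s : ℝ => s/a + 1/a^2) (1/a) x := by
      exact ((hasDerivAt_id x).div_const a).add_const (1/a^2)
    have := (hlin.mul h.exp).neg
    refine this.congr_deriv ?_
    field_simp
    ring
  rw [intervalIntegral.integral_eq_sub_of_hasDerivAt hd
    ((continuous_id.mul (Real.continuous_exp.comp (by continuity))).intervalIntegrable _ _)]
  field_simp
  simp only [mul_zero, neg_zero, Real.exp_zero]
  ring

lemma corr_pos {g χ : ℝ → ℝ} {c ε : ℝ} (hε : 0 < ε) (hpos : ∀ y, 0 < g y)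
    (hχ : ContDiff ℝ 2 χ) (hd : ∀ z, 0 < deriv χ z) (hp1 : ∀ z, χ (z + 1) = χ z + 1)
    (hode : ∀ z, ε * deriv (deriv χ) z - c * deriv χ z + g (χ z) = 0) : 0 < c := by
  by_contra hc
  push_neg at hc
  have hneg : ∀ x, deriv (deriv χ) x < 0 := by
    intro x
    have h := hode x
    have h1 : c * deriv χ x ≤ 0 := mul_nonpos_of_nonpos_of_nonneg hc (hd x).le
    nlinarith [hpos (χ x)]
  have hanti : StrictAnti (deriv χ) := strictAnti_of_deriv_neg hneg
  have := hanti (show (0:ℝ) < 1 by norm_num)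
  rw [show (1:ℝ) = 0 + 1 by norm_num, deriv_per (derivs hχ).1 hp1 0] at this
  exact lt_irrefl _ this

lemma tendsto_exp_neg {a : ℝ} (ha : 0 < a) :
    Tendsto (fun z : ℝ => Real.exp (-(a*z))) atTop (𝓝 0) := by
  have h1 : Tendsto (fun z : ℝ => a*z) atTop atTop :=
    Tendsto.const_mul_atTop ha tendsto_id
  exact Real.tendsto_exp_neg_atTop_nhds_zero.comp h1

lemma corr_deriv_bounds {g χ : ℝ → ℝ} {c ε m M B : ℝ} (hε : 0 < ε) (hgc : Continuous g)
    (hgb : ∀ y, m ≤ g y ∧ g y ≤ M) (hχ : ContDiff ℝ 2 χ)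
    (hode : ∀ z, ε * deriv (deriv χ) z - c * deriv χ z + g (χ z) = 0)
    (hd : ∀ z, 0 < deriv χ z) (hc : 0 < c) (hB : ∀ z, deriv χ z ≤ B) (w : ℝ) :
    m/c ≤ deriv χ w ∧ deriv χ w ≤ M/c := by
  obtain ⟨h1, h2, h3⟩ := derivs hχ
  set a := c/ε with ha
  have hapos : 0 < a := div_pos hc hε
  have hexp := tendsto_exp_neg hapos
  have hGc : Continuous (fun s => Real.exp (-(a*s)) * g (χ (w+s))) :=
    (Real.continuous_exp.comp (by continuity)).mul (hgc.comp (h1.continuous.comp (by continuity)))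
  have hEc : Continuous (fun s : ℝ => Real.exp (-(a*s))) :=
    Real.continuous_exp.comp (by continuity)
  -- upper bound
  have hub : ∀ z ≥ (0:ℝ), deriv χ w ≤ Real.exp (-(a*z)) * B
      + ε⁻¹ * (M * ((1 - Real.exp (-(a*z)))/a)) := by
    intro z hz
    have hid := key_id hε hgc hχ hode w z
    have hmono : (∫ s in (0:ℝ)..z, Real.exp (-(a*s)) * g (χ (w+s)))
        ≤ ∫ s in (0:ℝ)..z, Real.exp (-(a*s)) * M := by
      apply intervalIntegral.integral_mono_on hz (hGc.intervalIntegrable _ _)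
        ((hEc.mul continuous_const).intervalIntegrable _ _)
      intro x _
      exact mul_le_mul_of_nonneg_left (hgb _).2 (Real.exp_pos _).le
    have hintM : (∫ s in (0:ℝ)..z, Real.exp (-(a*s)) * M) = M * ((1 - Real.exp (-(a*z)))/a) := by
      rw [intervalIntegral.integral_mul_const, int_exp hapos.ne']
      ring
    rw [hintM] at hmono
    have hterm : Real.exp (-(a*z)) * deriv χ (w+z) ≤ Real.exp (-(a*z)) * B :=
      mul_le_mul_of_nonneg_left (hB _) (Real.exp_pos _).le
    have : ε⁻¹ * (∫ s in (0:ℝ)..z, Real.exp (-(a*s)) * g (χ (w+s)))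
        ≤ ε⁻¹ * (M * ((1 - Real.exp (-(a*z)))/a)) :=
      mul_le_mul_of_nonneg_left hmono (inv_nonneg.2 hε.le)
    linarith [hid]
  have hlb : ∀ z ≥ (0:ℝ), Real.exp (-(a*z)) * 0
      + ε⁻¹ * (m * ((1 - Real.exp (-(a*z)))/a)) ≤ deriv χ w := by
    intro z hz
    have hid := key_id hε hgc hχ hode w z
    have hmono : (∫ s in (0:ℝ)..z, Real.exp (-(a*s)) * m)
        ≤ ∫ s in (0:ℝ)..z, Real.exp (-(a*s)) * g (χ (w+s)) := by
      apply intervalIntegral.integral_mono_on hz ((hEc.mul continuous_const).intervalIntegrable _ _)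
        (hGc.intervalIntegrable _ _)
      intro x _
      exact mul_le_mul_of_nonneg_left (hgb _).1 (Real.exp_pos _).le
    have hintm : (∫ s in (0:ℝ)..z, Real.exp (-(a*s)) * m) = m * ((1 - Real.exp (-(a*z)))/a) := by
      rw [intervalIntegral.integral_mul_const, int_exp hapos.ne']
      ring
    rw [hintm] at hmono
    have hterm : 0 ≤ Real.exp (-(a*z)) * deriv χ (w+z) :=
      (mul_pos (Real.exp_pos _) (hd _)).le
    have : ε⁻¹ * (m * ((1 - Real.exp (-(a*z)))/a))
        ≤ ε⁻¹ * (∫ s in (0:ℝ)..z, Real.exp (-(a*s)) * g (χ (w+s))) :=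
      mul_le_mul_of_nonneg_left hmono (inv_nonneg.2 hε.le)
    linarith [hid]
  have t1 : Tendsto (fun z => (1 - Real.exp (-(a*z)))/a) atTop (𝓝 ((1-(0:ℝ))/a)) :=
    (tendsto_const_nhds.sub hexp).div_const a
  have tub : Tendsto (fun z => Real.exp (-(a*z)) * B
      + ε⁻¹ * (M * ((1 - Real.exp (-(a*z)))/a))) atTop
      (𝓝 (0 * B + ε⁻¹ * (M * ((1-(0:ℝ))/a)))) :=
    (hexp.mul_const B).add ((t1.const_mul M).const_mul ε⁻¹)
  have tlb : Tendsto (fun z => Real.exp (-(a*z)) * 0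
      + ε⁻¹ * (m * ((1 - Real.exp (-(a*z)))/a))) atTop
      (𝓝 (0 * 0 + ε⁻¹ * (m * ((1-(0:ℝ))/a)))) :=
    (hexp.mul_const 0).add ((t1.const_mul m).const_mul ε⁻¹)
  have hMc : 0 * B + ε⁻¹ * (M * ((1-(0:ℝ))/a)) = M/c := by
    rw [ha]; field_simp; ring
  have hmc : 0 * 0 + ε⁻¹ * (m * ((1-(0:ℝ))/a)) = m/c := by
    rw [ha]; field_simp; ring
  constructor
  · rw [← hmc]
    exact le_of_tendsto tlb ((eventually_ge_atTop 0).mono hlb)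
  · rw [← hMc]
    exact ge_of_tendsto tub ((eventually_ge_atTop 0).mono hub)

lemma exists_B {χ : ℝ → ℝ} (hχ : ContDiff ℝ 2 χ) (hp1 : ∀ z, χ (z + 1) = χ z + 1) :
    ∃ B, ∀ z, deriv χ z ≤ B := by
  obtain ⟨h1, h2, h3⟩ := derivs hχ
  obtain ⟨m', M', _, hb⟩ := per_bounds (deriv χ) h2.continuous (fun z => deriv_per h1 hp1 z)
  exact ⟨M', fun z => (hb z).2⟩

lemma int_deriv_one {χ : ℝ → ℝ} (hχ : ContDiff ℝ 2 χ) (hp1 : ∀ z, χ (z + 1) = χ z + 1) :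
    ∫ s in (0:ℝ)..1, deriv χ s = 1 := by
  obtain ⟨h1, h2, h3⟩ := derivs hχ
  rw [intervalIntegral.integral_deriv_eq_sub (fun x _ => h1 x)
    (h2.continuous.intervalIntegrable _ _)]
  have := hp1 0
  rw [zero_add] at this
  rw [this]; ring

lemma corr_c_bounds {g χ : ℝ → ℝ} {c ε m M B : ℝ} (hε : 0 < ε) (hgc : Continuous g)
    (hgb : ∀ y, m ≤ g y ∧ g y ≤ M) (hm : 0 < m) (hχ : ContDiff ℝ 2 χ)
    (hd : ∀ z, 0 < deriv χ z) (hp1 : ∀ z, χ (z + 1) = χ z + 1)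
    (hode : ∀ z, ε * deriv (deriv χ) z - c * deriv χ z + g (χ z) = 0)
    (hc : 0 < c) (hB : ∀ z, deriv χ z ≤ B) :
    m ≤ c ∧ c ≤ M := by
  obtain ⟨h1, h2, h3⟩ := derivs hχ
  have hone := int_deriv_one hχ hp1
  have hub : ∫ s in (0:ℝ)..1, deriv χ s ≤ ∫ s in (0:ℝ)..1, (M/c) := by
    apply intervalIntegral.integral_mono_on zero_le_one (h2.continuous.intervalIntegrable _ _)
      (continuous_const.intervalIntegrable _ _)
    exact fun x _ => (corr_deriv_bounds hε hgc hgb hχ hode hd hc hB x).2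
  have hlb : ∫ s in (0:ℝ)..1, (m/c) ≤ ∫ s in (0:ℝ)..1, deriv χ s := by
    apply intervalIntegral.integral_mono_on zero_le_one (continuous_const.intervalIntegrable _ _)
      (h2.continuous.intervalIntegrable _ _)
    exact fun x _ => (corr_deriv_bounds hε hgc hgb hχ hode hd hc hB x).1
  simp [hone] at hub hlb
  constructor
  · exact (div_le_one hc).1 hlb
  · have := (one_le_div hc).1 hub
    linarith

lemma chi_lip {χ : ℝ → ℝ} {L : ℝ} (hχ : ContDiff ℝ 2 χ) (hd : ∀ z, 0 < deriv χ z)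
    (hL : ∀ z, deriv χ z ≤ L) (x y : ℝ) : |χ y - χ x| ≤ L * |y - x| := by
  obtain ⟨h1, h2, h3⟩ := derivs hχ
  have := convex_univ.norm_image_sub_le_of_norm_deriv_le (𝕜 := ℝ)
    (fun z _ => h1 z) (fun z _ => by
      rw [Real.norm_eq_abs, abs_of_pos (hd z)]; exact hL z)
    (mem_univ x) (mem_univ y)
  simpa [Real.norm_eq_abs] using this

lemma corr_main {g χ : ℝ → ℝ} {c ε m M B : ℝ} {K : NNReal} (hε : 0 < ε)
    (hlip : LipschitzWith K g)
    (hgb : ∀ y, m ≤ g y ∧ g y ≤ M) (hm : 0 < m) (hχ : ContDiff ℝ 2 χ)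
    (hd : ∀ z, 0 < deriv χ z)
    (hode : ∀ z, ε * deriv (deriv χ) z - c * deriv χ z + g (χ z) = 0)
    (hc : 0 < c) (hB : ∀ z, deriv χ z ≤ B)
    (hχL : ∀ x y, |χ y - χ x| ≤ M/c * |y - x|) (w : ℝ) :
    |deriv χ w - g (χ w)/c| ≤ K * M * ε / c^3 := by
  obtain ⟨h1, h2, h3⟩ := derivs hχ
  have hgc : Continuous g := hlip.continuous
  set a := c/ε with ha
  have hapos : 0 < a := div_pos hc hε
  have hexp := tendsto_exp_neg hapos
  have hGc : Continuous (fun s => Real.exp (-(a*s)) * g (χ (w+s))) :=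
    (Real.continuous_exp.comp (by continuity)).mul (hgc.comp (h1.continuous.comp (by continuity)))
  have hEc : Continuous (fun s : ℝ => Real.exp (-(a*s))) :=
    Real.continuous_exp.comp (by continuity)
  set D : ℝ → ℝ := fun z => deriv χ w - Real.exp (-(a*z)) * deriv χ (w+z)
      - (1 - Real.exp (-(a*z))) * (g (χ w)/c) with hDdef
  have hDeq : ∀ z, D z = ε⁻¹ * ∫ s in (0:ℝ)..z,
      (Real.exp (-(a*s)) * g (χ (w+s)) - Real.exp (-(a*s)) * g (χ w)) := by
    intro z
    rw [intervalIntegral.integral_sub (g := fun s => Real.exp (-(a*s)) * g (χ w)) (hGc.intervalIntegrable _ _)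
      ((hEc.mul continuous_const).intervalIntegrable _ _),
      intervalIntegral.integral_mul_const, int_exp hapos.ne']
    have hid := key_id hε hgc hχ hode w z
    have hεa : ε * a = c := by rw [ha]; field_simp
    have : (1 - Real.exp (-(a*z))) * (g (χ w)/c)
        = ε⁻¹ * ((1 - Real.exp (-(a*z)))/a * g (χ w)) := by
      rw [ha]
      field_simp
    rw [hDdef]
    simp only []
    rw [this, hid]
    ring
  have hDb : ∀ z ≥ (0:ℝ), |D z| ≤ ε⁻¹ * ((K * (M/c)) * (1/a^2)) := by
    intro z hz
    rw [hDeq z, abs_mul, abs_of_nonneg (inv_nonneg.2 hε.le)]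
    apply mul_le_mul_of_nonneg_left _ (inv_nonneg.2 hε.le)
    calc |∫ s in (0:ℝ)..z, (Real.exp (-(a*s)) * g (χ (w+s)) - Real.exp (-(a*s)) * g (χ w))|
        ≤ ∫ s in (0:ℝ)..z, |Real.exp (-(a*s)) * g (χ (w+s)) - Real.exp (-(a*s)) * g (χ w)| :=
          intervalIntegral.abs_integral_le_integral_abs hz
      _ ≤ ∫ s in (0:ℝ)..z, (K * (M/c)) * (s * Real.exp (-(a*s))) := by
          apply intervalIntegral.integral_mono_on hz
            ((hGc.sub (hEc.mul continuous_const)).abs.intervalIntegrable _ _)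
            ((continuous_const.mul (continuous_id.mul hEc)).intervalIntegrable _ _)
          intro s hs
          simp only [Pi.sub_apply, Pi.mul_apply, id_eq]
          rw [← mul_sub, abs_mul, abs_of_pos (Real.exp_pos _)]
          have hlips : |g (χ (w+s)) - g (χ w)| ≤ K * |χ (w+s) - χ w| := by
            have := hlip.dist_le_mul (χ (w+s)) (χ w)
            simpa [Real.dist_eq] using this
          have hchl : |χ (w+s) - χ w| ≤ M/c * s := by
            have := hχL w (w+s)
            simpa [abs_of_nonneg hs.1] using this
          have h2' : |g (χ (w+s)) - g (χ w)| ≤ K * (M/c) * s := by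
            calc |g (χ (w+s)) - g (χ w)| ≤ K * |χ (w+s) - χ w| := hlips
              _ ≤ K * (M/c * s) := mul_le_mul_of_nonneg_left hchl K.coe_nonneg
              _ = K * (M/c) * s := by ring
          calc Real.exp (-(a*s)) * |g (χ (w+s)) - g (χ w)|
              ≤ Real.exp (-(a*s)) * (K * (M/c) * s) :=
                mul_le_mul_of_nonneg_left h2' (Real.exp_pos _).le
            _ = (K * (M/c)) * (s * Real.exp (-(a*s))) := by ring
      _ ≤ (K * (M/c)) * (1/a^2) := by
          rw [intervalIntegral.integral_const_mul, int_s_exp hapos.ne']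
          have hM : (0:ℝ) < M := lt_of_lt_of_le hm ((hgb 0).1.trans (hgb 0).2)
          apply mul_le_mul_of_nonneg_left _
            (mul_nonneg K.coe_nonneg (div_nonneg hM.le hc.le))
          have h0 : 0 ≤ (z/a + 1/a^2) * Real.exp (-(a*z)) := by positivity
          linarith
  have htend : Tendsto D atTop (𝓝 (deriv χ w - 0 - (1 - 0) * (g (χ w)/c))) := by
    apply Tendsto.sub
    apply Tendsto.sub tendsto_const_nhds
    · have hb0 : Tendsto (fun z => Real.exp (-(a*z)) * B) atTop (𝓝 0) := by
        simpa using hexp.mul_const B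
      apply squeeze_zero_norm _ hb0
      intro z
      rw [Real.norm_eq_abs, abs_mul, abs_of_pos (Real.exp_pos _), abs_of_pos (hd _)]
      exact mul_le_mul_of_nonneg_left (hB _) (Real.exp_pos _).le
    · exact (tendsto_const_nhds.sub hexp).mul_const _
  have hlim : |deriv χ w - g (χ w)/c| ≤ ε⁻¹ * ((K * (M/c)) * (1/a^2)) := by
    have habs : Tendsto (fun z => |D z|) atTop (𝓝 |deriv χ w - 0 - (1-0) * (g (χ w)/c)|) :=
      htend.abs
    have : |deriv χ w - 0 - (1-0) * (g (χ w)/c)| = |deriv χ w - g (χ w)/c| := by norm_num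
    rw [this] at habs
    exact le_of_tendsto habs ((eventually_ge_atTop 0).mono hDb)
  calc |deriv χ w - g (χ w)/c| ≤ ε⁻¹ * ((K * (M/c)) * (1/a^2)) := hlim
    _ = K * M * ε / c^3 := by rw [ha]; field_simp

lemma F_gap {g : ℝ → ℝ} {M : ℝ} (hgc : Continuous g) (hgb : ∀ y, 0 < g y ∧ g y ≤ M)
    {b a : ℝ} (hba : b ≤ a) :
    (a - b)/M ≤ (∫ s in (0:ℝ)..a, (g s)⁻¹) - ∫ s in (0:ℝ)..b, (g s)⁻¹ := by
  have hM : 0 < M := lt_of_lt_of_le (hgb 0).1 (hgb 0).2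
  have hcont : Continuous (fun s => (g s)⁻¹) := hgc.inv₀ (fun s => (hgb s).1.ne')
  have hsub : (∫ s in (0:ℝ)..a, (g s)⁻¹) - (∫ s in (0:ℝ)..b, (g s)⁻¹)
      = ∫ s in b..a, (g s)⁻¹ :=
    intervalIntegral.integral_interval_sub_left (hcont.intervalIntegrable 0 a)
      (hcont.intervalIntegrable 0 b)
  rw [hsub]
  have : ∫ s in b..a, (M:ℝ)⁻¹ ≤ ∫ s in b..a, (g s)⁻¹ := by
    apply intervalIntegral.integral_mono_on hba (continuous_const.intervalIntegrable _ _)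
      (hcont.intervalIntegrable _ _)
    intro x _
    exact inv_anti₀ (hgb x).1 (hgb x).2
  have hc2 : (∫ _ in b..a, (M:ℝ)⁻¹) = (a-b)/M := by
    simp [smul_eq_mul]
    ring
  rw [hc2] at this
  exact this

lemma F_abs_gap {g : ℝ → ℝ} {M : ℝ} (hgc : Continuous g) (hgb : ∀ y, 0 < g y ∧ g y ≤ M)
    (a b : ℝ) :
    |a - b| ≤ M * |(∫ s in (0:ℝ)..a, (g s)⁻¹) - ∫ s in (0:ℝ)..b, (g s)⁻¹| := by
  have hM : 0 < M := lt_of_lt_of_le (hgb 0).1 (hgb 0).2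
  rcases le_total b a with h | h
  · have := F_gap hgc hgb h
    rw [abs_of_nonneg (by linarith), abs_of_nonneg (by
      have := F_gap hgc hgb h
      nlinarith [div_nonneg (sub_nonneg.2 h) hM.le])]
    calc a - b = M * ((a-b)/M) := by field_simp
      _ ≤ M * _ := mul_le_mul_of_nonneg_left this hM.le
  · have := F_gap hgc hgb h
    rw [abs_of_nonpos (by linarith), abs_of_nonpos (by
      nlinarith [div_nonneg (sub_nonneg.2 h) hM.le])]
    calc -(a - b) = M * ((b-a)/M) := by field_simp; ring
      _ ≤ M * _ := by
        rw [neg_sub]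
        exact mul_le_mul_of_nonneg_left this hM.le

lemma hasDerivAt_F {g : ℝ → ℝ} (hgc : Continuous g) (hgpos : ∀ y, 0 < g y) (y : ℝ) :
    HasDerivAt (fun u => ∫ s in (0:ℝ)..u, (g s)⁻¹) (g y)⁻¹ y := by
  have hcont : Continuous (fun s => (g s)⁻¹) := hgc.inv₀ (fun s => (hgpos s).ne')
  exact intervalIntegral.integral_hasDerivAt_right (hcont.intervalIntegrable _ _)
    hcont.aestronglyMeasurable.stronglyMeasurableAtFilter hcont.continuousAt

lemma v_bound {g χ : ℝ → ℝ} {c m E : ℝ} (hgc : Continuous g) (hgpos : ∀ y, 0 < g y)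
    (hgm : ∀ y, m ≤ g y) (hm : 0 < m) (hχ : ContDiff ℝ 2 χ) (hc : 0 < c)
    (hE : ∀ w, |deriv χ w - g (χ w)/c| ≤ E) (h0 : χ 0 = 0) (z : ℝ) :
    |(∫ s in (0:ℝ)..(χ z), (g s)⁻¹) - z * c⁻¹| ≤ E/m * |z| := by
  obtain ⟨h1, h2, h3⟩ := derivs hχ
  set u : ℝ → ℝ := fun z => (∫ s in (0:ℝ)..(χ z), (g s)⁻¹) - z * c⁻¹ with hu
  have hder : ∀ x, HasDerivAt u ((g (χ x))⁻¹ * deriv χ x - c⁻¹) x := by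
    intro x
    have hF := hasDerivAt_F hgc hgpos (χ x)
    have hcomp := HasDerivAt.comp x hF ((h1 x).hasDerivAt)
    exact (hcomp.sub (((hasDerivAt_id x).mul_const c⁻¹))).congr_deriv (by ring)
  have hbound : ∀ x, ‖(g (χ x))⁻¹ * deriv χ x - c⁻¹‖ ≤ E/m := by
    intro x
    have hgx : 0 < g (χ x) := hgpos _
    have heq : (g (χ x))⁻¹ * deriv χ x - c⁻¹ = (deriv χ x - g (χ x)/c) / g (χ x) := by
      field_simp
    rw [Real.norm_eq_abs, heq, abs_div, abs_of_pos hgx]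
    have hEnn : 0 ≤ E := le_trans (abs_nonneg _) (hE 0)
    exact div_le_div₀ hEnn (hE x) hm (hgm _)
  have := convex_univ.norm_image_sub_le_of_norm_hasDerivWithin_le
    (fun x (_ : x ∈ (univ : Set ℝ)) => (hder x).hasDerivWithinAt)
    (fun x _ => hbound x) (mem_univ 0) (mem_univ z)
  have hu0 : u 0 = 0 := by simp [hu, h0]
  rw [hu0, sub_zero, sub_zero] at this
  simpa [Real.norm_eq_abs] using this

lemma zero_case {g χ : ℝ → ℝ} {c : ℝ} (hgc : Continuous g) (hgpos : ∀ y, 0 < g y)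
    (hχ : ContDiff ℝ 2 χ) (hd : ∀ z, 0 < deriv χ z) (hp1 : ∀ z, χ (z + 1) = χ z + 1)
    (hode : ∀ z, c * deriv χ z = g (χ z)) (h0 : χ 0 = 0) :
    0 < c ∧ c⁻¹ = (∫ s in (0:ℝ)..1, (g s)⁻¹)
      ∧ ∀ z, (∫ s in (0:ℝ)..(χ z), (g s)⁻¹) = z * c⁻¹ := by
  obtain ⟨h1, h2, h3⟩ := derivs hχ
  have hc : 0 < c := by
    have h := hode 0
    have := hgpos (χ 0)
    nlinarith [hd 0]
  set u : ℝ → ℝ := fun z => (∫ s in (0:ℝ)..(χ z), (g s)⁻¹) - z * c⁻¹ with hu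
  have hder : ∀ x, HasDerivAt u 0 x := by
    intro x
    have hF := hasDerivAt_F hgc hgpos (χ x)
    have hcomp := HasDerivAt.comp x hF ((h1 x).hasDerivAt)
    have := hcomp.sub (((hasDerivAt_id x).mul_const c⁻¹))
    refine this.congr_deriv ?_
    have hox := hode x
    have hgx := (hgpos (χ x)).ne'
    field_simp
    linarith [hox]
  have hconst : ∀ z, u z = u 0 := fun z =>
    is_const_of_deriv_eq_zero (fun x => (hder x).differentiableAt) (fun x => (hder x).deriv) z 0
  have hu0 : u 0 = 0 := by simp [hu, h0]
  have hres : ∀ z, (∫ s in (0:ℝ)..(χ z), (g s)⁻¹) = z * c⁻¹ := by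
    intro z
    have := hconst z
    rw [hu0] at this
    simpa [hu, sub_eq_zero] using this
  have h11 : χ 1 = 1 := by
    have := hp1 0
    rw [zero_add, h0] at this
    simpa using this
  have := hres 1
  rw [h11, one_mul] at this
  exact ⟨hc, this.symm, hres⟩

theorem statement_6' {n : ℕ} (g : ℝ → ℝ) (hg : ∃ K, LipschitzWith K g)
    (hper : ∀ y, g (y + 1) = g y) (hpos : ∀ y, 0 < g y)
    (cbar : EuclideanSpace ℝ (Fin n) → ℝ) (χfun : EuclideanSpace ℝ (Fin n) → ℝ → ℝ)
    (hcorr : ∀ p, ContDiff ℝ 2 (χfun p) ∧ (∀ z, 0 < deriv (χfun p) z) ∧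
      (∀ z, χfun p (z + 1) = χfun p z + 1) ∧
      ∀ z, ‖p‖ ^ 2 * deriv (deriv (χfun p)) z - cbar p * deriv (χfun p) z + g (χfun p z) = 0)
    (hnorm : ∀ p, χfun p 0 = 0) :
    Tendsto cbar (𝓝[≠] (0 : EuclideanSpace ℝ (Fin n)))
      (𝓝 ((∫ s in (0:ℝ)..1, (g s)⁻¹)⁻¹)) ∧
    cbar 0 = (∫ s in (0:ℝ)..1, (g s)⁻¹)⁻¹ ∧
    χfun 0 1 = 1 ∧
    TendstoUniformly (fun p z => χfun p z) (χfun 0)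
      (𝓝[≠] (0 : EuclideanSpace ℝ (Fin n))) := by
  obtain ⟨K, hK⟩ := hg
  have hgc : Continuous g := hK.continuous
  obtain ⟨m, M, ⟨x₀, hx₀⟩, hb⟩ := per_bounds g hgc hper
  have hm : 0 < m := hx₀ ▸ hpos x₀
  have hM : 0 < M := lt_of_lt_of_le hm ((hb 0).1.trans (hb 0).2)
  have hgb : ∀ y, m ≤ g y ∧ g y ≤ M := hb
  have hgb' : ∀ y, 0 < g y ∧ g y ≤ M := fun y => ⟨hpos y, (hb y).2⟩
  set I : ℝ := ∫ s in (0:ℝ)..1, (g s)⁻¹ with hIdef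
  -- the p = 0 case
  obtain ⟨hχ0, hd0, hp10, hode0⟩ := hcorr 0
  have hodez : ∀ z, cbar 0 * deriv (χfun 0) z = g (χfun 0 z) := by
    intro z
    have h := hode0 z
    simp only [norm_zero] at h
    nlinarith [h]
  obtain ⟨hc0, hc0inv, hres0⟩ := zero_case hgc hpos hχ0 hd0 hp10 hodez (hnorm 0)
  have hI0 : 0 < I := by rw [hIdef, ← hc0inv]; positivity
  have hcbar0 : cbar 0 = I⁻¹ := by rw [hIdef, ← hc0inv, inv_inv]
  have hχ01 : χfun 0 1 = 1 := by
    have h := hp10 0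
    rw [zero_add, hnorm 0] at h
    simpa using h
  have hres0' : ∀ z, (∫ s in (0:ℝ)..(χfun 0 z), (g s)⁻¹) = z * I := by
    intro z
    rw [hres0 z, hc0inv, ← hIdef]
  -- constants
  set C : ℝ := K * M / (m^3 * m) with hCdef
  have hC0 : 0 ≤ C := by positivity
  -- main estimates for p ≠ 0
  have hkey : ∀ p : EuclideanSpace ℝ (Fin n), p ≠ 0 →
      0 < cbar p ∧
      (∀ z, |(∫ s in (0:ℝ)..(χfun p z), (g s)⁻¹) - z * (cbar p)⁻¹| ≤ C * ‖p‖^2 * |z|) ∧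
      |I - (cbar p)⁻¹| ≤ C * ‖p‖^2 := by
    intro p hp
    obtain ⟨hχ, hd, hp1, hode⟩ := hcorr p
    have hε : (0:ℝ) < ‖p‖^2 := by
      have : 0 < ‖p‖ := norm_pos_iff.2 hp
      positivity
    have hc : 0 < cbar p := corr_pos hε hpos hχ hd hp1 hode
    obtain ⟨B, hB⟩ := exists_B hχ hp1
    obtain ⟨hmc, hcM⟩ := corr_c_bounds hε hgc hgb hm hχ hd hp1 hode hc hB
    have hdub : ∀ z, deriv (χfun p) z ≤ M / cbar p :=
      fun z => (corr_deriv_bounds hε hgc hgb hχ hode hd hc hB z).2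
    have hχL : ∀ x y, |χfun p y - χfun p x| ≤ M / cbar p * |y - x| :=
      fun x y => chi_lip hχ hd hdub x y
    have hE : ∀ w, |deriv (χfun p) w - g (χfun p w) / cbar p|
        ≤ K * M * ‖p‖^2 / (cbar p)^3 :=
      corr_main hε hK hgb hm hχ hd hode hc hB hχL
    have hEC : K * M * ‖p‖^2 / (cbar p)^3 / m ≤ C * ‖p‖^2 := by
      rw [div_div, hCdef]
      have hden : m^3 * m ≤ (cbar p)^3 * m := by
        have : m^3 ≤ (cbar p)^3 := pow_le_pow_left₀ hm.le hmc 3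
        exact mul_le_mul_of_nonneg_right this hm.le
      calc K * M * ‖p‖^2 / ((cbar p)^3 * m) ≤ K * M * ‖p‖^2 / (m^3 * m) :=
            div_le_div_of_nonneg_left (by positivity) (by positivity) hden
        _ = K * M / (m^3 * m) * ‖p‖^2 := by ring
    have hv : ∀ z, |(∫ s in (0:ℝ)..(χfun p z), (g s)⁻¹) - z * (cbar p)⁻¹|
        ≤ C * ‖p‖^2 * |z| := by
      intro z
      calc |(∫ s in (0:ℝ)..(χfun p z), (g s)⁻¹) - z * (cbar p)⁻¹|
          ≤ K * M * ‖p‖^2 / (cbar p)^3 / m * |z| :=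
            v_bound hgc hpos (fun y => (hgb y).1) hm hχ hc hE (hnorm p) z
        _ ≤ C * ‖p‖^2 * |z| := mul_le_mul_of_nonneg_right hEC (abs_nonneg _)
    refine ⟨hc, hv, ?_⟩
    have hχp1 : χfun p 1 = 1 := by
      have h := hp1 0
      rw [zero_add, hnorm p] at h
      simpa using h
    have := hv 1
    rw [hχp1] at this
    simpa [hIdef] using this
  -- norm squared tendsto
  have hev : ∀ᶠ p in 𝓝[≠] (0 : EuclideanSpace ℝ (Fin n)), p ≠ 0 :=
    eventually_mem_nhdsWithin
  have hnorm2 : Tendsto (fun p : EuclideanSpace ℝ (Fin n) => ‖p‖^2)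
      (𝓝[≠] (0 : EuclideanSpace ℝ (Fin n))) (𝓝 0) := by
    have hcont : Tendsto (fun p : EuclideanSpace ℝ (Fin n) => ‖p‖^2) (𝓝 0) (𝓝 0) := by
      have := ((continuous_norm (E := EuclideanSpace ℝ (Fin n))).pow 2).tendsto 0
      rw [show ((fun a : EuclideanSpace ℝ (Fin n) => ‖a‖) ^ 2) 0 = 0 by simp] at this
      exact this
    exact hcont.mono_left nhdsWithin_le_nhds
  have hCε : Tendsto (fun p : EuclideanSpace ℝ (Fin n) => C * ‖p‖^2)
      (𝓝[≠] (0 : EuclideanSpace ℝ (Fin n))) (𝓝 0) := by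
    simpa using hnorm2.const_mul C
  -- part 1
  have hinv : Tendsto (fun p => (cbar p)⁻¹)
      (𝓝[≠] (0 : EuclideanSpace ℝ (Fin n))) (𝓝 I) := by
    have hsub : Tendsto (fun p => (cbar p)⁻¹ - I)
        (𝓝[≠] (0 : EuclideanSpace ℝ (Fin n))) (𝓝 0) := by
      apply squeeze_zero_norm' _ hCε
      filter_upwards [hev] with p hp
      rw [Real.norm_eq_abs, abs_sub_comm]
      exact (hkey p hp).2.2
    have := hsub.add (tendsto_const_nhds (x := I))
    simpa using this
  have htc : Tendsto cbar (𝓝[≠] (0 : EuclideanSpace ℝ (Fin n))) (𝓝 I⁻¹) := by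
    have h2 := hinv.inv₀ hI0.ne'
    apply h2.congr'
    filter_upwards [hev] with p hp
    exact inv_inv (cbar p)
  refine ⟨htc, hcbar0, hχ01, ?_⟩
  -- uniform convergence
  rw [Metric.tendstoUniformly_iff]
  intro δ hδ
  have h2MC : Tendsto (fun p : EuclideanSpace ℝ (Fin n) => 2 * M * (C * ‖p‖^2))
      (𝓝[≠] (0 : EuclideanSpace ℝ (Fin n))) (𝓝 0) := by
    simpa using hCε.const_mul (2*M)
  have hevb : ∀ᶠ p in 𝓝[≠] (0 : EuclideanSpace ℝ (Fin n)),
      2 * M * (C * ‖p‖^2) < δ :=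
    h2MC.eventually_lt_const hδ
  filter_upwards [hevb, hev] with p hpb hp
  intro z
  rw [Real.dist_eq]
  -- reduce to fractional part
  obtain ⟨hχ, hd, hp1, _⟩ := hcorr p
  have hred : χfun 0 z - χfun p z = χfun 0 (Int.fract z) - χfun p (Int.fract z) := by
    have hzz : Int.fract z + (⌊z⌋ : ℝ) = z := by
      rw [Int.fract]; ring
    have hzz' : Int.fract z + ((⌊z⌋ : ℤ) : ℝ) = z := by exact_mod_cast hzz
    have e0 : χfun 0 z = χfun 0 (Int.fract z) + ((⌊z⌋ : ℤ) : ℝ) := by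
      nth_rewrite 1 [← hzz']
      exact chi_int _ hp10 _ _
    have ep : χfun p z = χfun p (Int.fract z) + ((⌊z⌋ : ℤ) : ℝ) := by
      nth_rewrite 1 [← hzz']
      exact chi_int _ hp1 _ _
    rw [e0, ep]
    ring
  rw [hred]
  set r := Int.fract z with hr
  have hr0 : 0 ≤ r := Int.fract_nonneg z
  have hr1 : |r| ≤ 1 := by
    rw [abs_of_nonneg hr0]
    exact (Int.fract_lt_one z).le
  have hFgap := F_abs_gap hgc hgb' (χfun 0 r) (χfun p r)
  have hdiff : |(∫ s in (0:ℝ)..(χfun 0 r), (g s)⁻¹) - ∫ s in (0:ℝ)..(χfun p r), (g s)⁻¹|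
      ≤ 2 * (C * ‖p‖^2) := by
    have h1 : |(∫ s in (0:ℝ)..(χfun p r), (g s)⁻¹) - r * (cbar p)⁻¹| ≤ C * ‖p‖^2 := by
      calc |(∫ s in (0:ℝ)..(χfun p r), (g s)⁻¹) - r * (cbar p)⁻¹|
          ≤ C * ‖p‖^2 * |r| := (hkey p hp).2.1 r
        _ ≤ C * ‖p‖^2 * 1 := mul_le_mul_of_nonneg_left hr1 (by positivity)
        _ = C * ‖p‖^2 := mul_one _
    have h2 : |r * (cbar p)⁻¹ - r * I| ≤ C * ‖p‖^2 := by
      calc |r * (cbar p)⁻¹ - r * I| = |r| * |(cbar p)⁻¹ - I| := by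
            rw [← abs_mul]; ring_nf
        _ ≤ 1 * (C * ‖p‖^2) := by
            apply mul_le_mul hr1 _ (abs_nonneg _) zero_le_one
            rw [abs_sub_comm]
            exact (hkey p hp).2.2
        _ = C * ‖p‖^2 := one_mul _
    have h0 : (∫ s in (0:ℝ)..(χfun 0 r), (g s)⁻¹) = r * I := hres0' r
    rw [h0]
    calc |r * I - ∫ s in (0:ℝ)..(χfun p r), (g s)⁻¹|
        ≤ |r * I - r * (cbar p)⁻¹| + |r * (cbar p)⁻¹ - ∫ s in (0:ℝ)..(χfun p r), (g s)⁻¹| :=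
          abs_sub_le _ _ _
      _ ≤ C * ‖p‖^2 + C * ‖p‖^2 := by
          have e1 : |r * I - r * (cbar p)⁻¹| = |r * (cbar p)⁻¹ - r * I| := abs_sub_comm _ _
          have e2 : |r * (cbar p)⁻¹ - ∫ s in (0:ℝ)..(χfun p r), (g s)⁻¹|
              = |(∫ s in (0:ℝ)..(χfun p r), (g s)⁻¹) - r * (cbar p)⁻¹| := abs_sub_comm _ _
          rw [e1, e2]
          exact add_le_add h2 h1
      _ = 2 * (C * ‖p‖^2) := by ring
  calc |χfun 0 r - χfun p r|
      ≤ M * |(∫ s in (0:ℝ)..(χfun 0 r), (g s)⁻¹) - ∫ s in (0:ℝ)..(χfun p r), (g s)⁻¹| := hFgap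
    _ ≤ M * (2 * (C * ‖p‖^2)) := mul_le_mul_of_nonneg_left hdiff hM.le
    _ = 2 * M * (C * ‖p‖^2) := by ring
    _ < δ := hpb

/-- As `|p| → 0`, `c̄(|p|) → (∫₀¹ 1/g)⁻¹` and the correctors `χ_p` normalized by `χ_p(0) = 0`
converge uniformly on `ℝ` to `χ₀`, the corrector for `p = 0` (i.e. the unique increasing
solution of `c̄(0)·χ₀' = g(χ₀)` with `χ₀(0) = 0`, `χ₀(1) = 1`). -/
theorem statement_6 {n : ℕ} (g : ℝ → ℝ) (hg : ∃ K, LipschitzWith K g)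
    (hper : ∀ y, g (y + 1) = g y) (hpos : ∀ y, 0 < g y)
    (cbar : EuclideanSpace ℝ (Fin n) → ℝ) (χfun : EuclideanSpace ℝ (Fin n) → ℝ → ℝ)
    (hcorr : ∀ p, IsCorrector g p (cbar p) (χfun p))
    (hnorm : ∀ p, χfun p 0 = 0) :
    Tendsto cbar (𝓝[≠] (0 : EuclideanSpace ℝ (Fin n)))
      (𝓝 ((∫ s in (0:ℝ)..1, (g s)⁻¹)⁻¹)) ∧
    cbar 0 = (∫ s in (0:ℝ)..1, (g s)⁻¹)⁻¹ ∧
    χfun 0 1 = 1 ∧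
    TendstoUniformly (fun p z => χfun p z) (χfun 0)
      (𝓝[≠] (0 : EuclideanSpace ℝ (Fin n))) := by
  exact statement_6' g hg hper hpos cbar χfun (fun p => hcorr p) hnorm
end
end

section
/- As |p| → +∞ one has c̄(|p|) → ∫₀¹ g(s) ds, and the correctors χ_p normalized by χ_p(0) = 0 satisfy χ_p(z) → z uniformly on ℝ together with χ_p'(z) → 1 uniformly on ℝ. -/
open Set Filter intervalIntegral
open scoped Topology

noncomputable section

lemma per_fract {f : ℝ → ℝ} (h : Function.Periodic f 1) (z : ℝ) : f (Int.fract z) = f z := by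
  have h2 := h.sub_int_mul_eq (x := z) (n := ⌊z⌋)
  rw [mul_one] at h2
  rw [Int.fract, h2]

lemma fract_mem_Icc (z : ℝ) : Int.fract z ∈ Icc (0:ℝ) 1 :=
  ⟨Int.fract_nonneg z, (Int.fract_lt_one z).le⟩

/-- The main quantitative estimate for a single `p` with `1 ≤ ‖p‖`. -/
lemma corrector_estimate {n : ℕ} (g : ℝ → ℝ) (hgc : Continuous g)
    (hgper : Function.Periodic g 1) (hpos : ∀ y, 0 < g y)
    {m M : ℝ} (hm : 0 < m) (hbd : ∀ y, m ≤ g y ∧ g y ≤ M)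
    (p : EuclideanSpace ℝ (Fin n)) (c : ℝ) (χ : ℝ → ℝ)
    (hcorr : IsCorrector g p c χ) (hnorm : χ 0 = 0) (hp : 1 ≤ ‖p‖) :
    |c - ∫ s in (0:ℝ)..1, g s| ≤ (M * (M / m) + M) * (M + 1) / ‖p‖ ^ 2 ∧
    (∀ z, |χ z - z| ≤ (M * (M / m) + M) * (M + 1) / ‖p‖ ^ 2) ∧
    (∀ z, |deriv χ z - 1| ≤ (M * (M / m) + M) * (M + 1) / ‖p‖ ^ 2) := by
  obtain ⟨hC2, hφpos, hper1, heq⟩ := hcorr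
  have hM : 0 < M := lt_of_lt_of_le hm (le_trans (hbd 0).1 (hbd 0).2)
  have hMm : 0 ≤ M / m := div_nonneg hM.le hm.le
  obtain ⟨C₀, hC₀def⟩ : ∃ C₀, C₀ = M * (M / m) + M := ⟨_, rfl⟩
  rw [← hC₀def]
  have hC₀pos : 0 < C₀ := by rw [hC₀def]; positivity
  have hp2 : (1:ℝ) ≤ ‖p‖ ^ 2 := by nlinarith
  have hp2pos : (0:ℝ) < ‖p‖ ^ 2 := by linarith
  obtain ⟨L, hLdef⟩ : ∃ L, L = C₀ / ‖p‖ ^ 2 := ⟨_, rfl⟩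
  have hL0 : 0 ≤ L := by rw [hLdef]; positivity
  -- smoothness facts
  have hC2' : ContDiff ℝ ((1:ℕ) + 1) χ := by exact_mod_cast hC2
  have hχdiff : Differentiable ℝ χ := (contDiff_succ_iff_deriv.mp hC2').1
  have hφC1 : ContDiff ℝ 1 (deriv χ) := (contDiff_succ_iff_deriv.mp hC2').2.2
  have hφdiff : Differentiable ℝ (deriv χ) := (contDiff_one_iff_deriv.mp hφC1).1
  have hφ'cont : Continuous (deriv (deriv χ)) := (contDiff_one_iff_deriv.mp hφC1).2
  have hφcont : Continuous (deriv χ) := hφdiff.continuous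
  have hχcont : Continuous χ := hχdiff.continuous
  -- periodicity of the derivative
  have hφper : Function.Periodic (deriv χ) 1 := by
    intro z
    calc deriv χ (z + 1) = deriv (fun z => χ (z + 1)) z := (deriv_comp_add_const χ 1 z).symm
      _ = deriv (fun z => χ z + 1) z := by
          congr 1; funext w; exact hper1 w
      _ = deriv χ z := by rw [deriv_add_const]
  have hχ1 : χ 1 = 1 := by have := hper1 0; rw [zero_add, hnorm] at this; linarith
  -- integral of deriv χ over one period is 1
  have hint1 : ∫ z in (0:ℝ)..1, deriv χ z = 1 := by
    rw [integral_deriv_eq_sub (fun x _ => hχdiff x) (hφcont.intervalIntegrable 0 1)]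
    rw [hχ1, hnorm]; ring
  -- integral of second derivative over one period is 0
  have hint2 : ∫ z in (0:ℝ)..1, deriv (deriv χ) z = 0 := by
    rw [integral_deriv_eq_sub (fun x _ => hφdiff x) (hφ'cont.intervalIntegrable 0 1)]
    have := hφper 0
    rw [zero_add] at this
    rw [this]; ring
  -- c equals the integral of g ∘ χ over one period
  have hgχcont : Continuous fun z => g (χ z) := hgc.comp hχcont
  have key : c = ∫ z in (0:ℝ)..1, g (χ z) := by
    have e : ∀ z, g (χ z) = c * deriv χ z - ‖p‖ ^ 2 * deriv (deriv χ) z := fun z => by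
      linarith [heq z]
    have : ∫ z in (0:ℝ)..1, g (χ z)
        = ∫ z in (0:ℝ)..1, (c * deriv χ z - ‖p‖ ^ 2 * deriv (deriv χ) z) := by
      simp only [e]
    rw [this, integral_sub (f := fun z => c * deriv χ z) (g := fun z => ‖p‖ ^ 2 * deriv (deriv χ) z) ((continuous_const.mul hφcont).intervalIntegrable 0 1)
        ((continuous_const.mul hφ'cont).intervalIntegrable 0 1),
      integral_const_mul, integral_const_mul, hint1, hint2]
    ring
  -- bounds on c
  have hc_lb : m ≤ c := by
    have h1 : (∫ _ in (0:ℝ)..1, m) ≤ ∫ z in (0:ℝ)..1, g (χ z) :=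
      integral_mono_on zero_le_one (intervalIntegrable_const)
        (hgχcont.intervalIntegrable 0 1) (fun x _ => (hbd (χ x)).1)
    rw [integral_const] at h1
    rw [key]; simpa using h1
  have hc_ub : c ≤ M := by
    have h1 : (∫ z in (0:ℝ)..1, g (χ z)) ≤ ∫ _ in (0:ℝ)..1, M :=
      integral_mono_on zero_le_one (hgχcont.intervalIntegrable 0 1)
        (intervalIntegrable_const) (fun x _ => (hbd (χ x)).2)
    rw [integral_const] at h1
    rw [key]; simpa using h1
  -- upper bound on deriv χ via the maximum principle
  obtain ⟨z₀, hz₀mem, hz₀⟩ := isCompact_Icc.exists_isMaxOn (nonempty_Icc.2 zero_le_one)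
    (hφcont.continuousOn (s := Icc (0:ℝ) 1))
  have hmax : ∀ z, deriv χ z ≤ deriv χ z₀ := by
    intro z
    have hf : deriv χ (Int.fract z) = deriv χ z := per_fract hφper z
    rw [← hf]
    exact hz₀ (fract_mem_Icc z)
  have hlocmax : IsLocalMax (deriv χ) z₀ := by
    have : IsMaxOn (deriv χ) univ z₀ := fun x _ => hmax x
    exact this.isLocalMax univ_mem
  have hderiv0 : deriv (deriv χ) z₀ = 0 := hlocmax.deriv_eq_zero
  have hφub : ∀ z, deriv χ z ≤ M / m := by
    intro z
    have h1 := heq z₀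
    rw [hderiv0] at h1
    have h2 : c * deriv χ z₀ = g (χ z₀) := by linarith
    have h3 : m * deriv χ z₀ ≤ M := by
      nlinarith [hφpos z₀, (hbd (χ z₀)).2, hc_lb]
    calc deriv χ z ≤ deriv χ z₀ := hmax z
      _ ≤ M / m := by rw [le_div_iff₀ hm]; linarith [mul_comm m (deriv χ z₀)]
  -- bound on the second derivative
  have hsnd : ∀ z, |deriv (deriv χ) z| ≤ L := by
    intro z
    have h1 := heq z
    have h2 : |‖p‖ ^ 2 * deriv (deriv χ) z| ≤ C₀ := by
      rw [abs_le]
      constructor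
      · have h3 : 0 ≤ c * deriv χ z := mul_nonneg (hm.le.trans hc_lb) (hφpos z).le
        have h4 : g (χ z) ≤ M := (hbd (χ z)).2
        have h5 : 0 ≤ M * (M / m) := mul_nonneg hM.le hMm
        linarith
      · have h3 : c * deriv χ z ≤ M * (M / m) :=
          mul_le_mul hc_ub (hφub z) (hφpos z).le hM.le
        have h4 : 0 < g (χ z) := hpos (χ z)
        linarith
    rw [hLdef, le_div_iff₀ hp2pos]
    calc |deriv (deriv χ) z| * ‖p‖ ^ 2 = |‖p‖ ^ 2 * deriv (deriv χ) z| := by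
          rw [abs_mul, abs_of_pos hp2pos, mul_comm]
      _ ≤ C₀ := h2
  -- deriv χ is L-Lipschitz
  have hlip : ∀ x y : ℝ, |deriv χ y - deriv χ x| ≤ L * |y - x| := by
    intro x y
    have := convex_univ.norm_image_sub_le_of_norm_deriv_le (f := deriv χ)
      (fun t _ => hφdiff t) (fun t _ => by simpa using hsnd t)
      (mem_univ x) (mem_univ y)
    simpa [Real.norm_eq_abs] using this
  -- deriv χ is within L of 1
  have hφ1 : ∀ z, |deriv χ z - 1| ≤ L := by
    have key2 : ∀ z ∈ Icc (0:ℝ) 1, |deriv χ z - 1| ≤ L := by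
      intro z hz
      have e : deriv χ z - 1 = ∫ w in (0:ℝ)..1, (deriv χ z - deriv χ w) := by
        rw [integral_sub intervalIntegrable_const (hφcont.intervalIntegrable 0 1),
          hint1, integral_const]
        simp
      rw [e, ← Real.norm_eq_abs]
      have hb : ∀ w ∈ Set.uIoc (0:ℝ) 1, ‖deriv χ z - deriv χ w‖ ≤ L := by
        intro w hw
        rw [Set.uIoc_of_le zero_le_one] at hw
        have h1 : |deriv χ z - deriv χ w| ≤ L * |z - w| := hlip w z
        have h2 : |z - w| ≤ 1 := by
          rw [abs_le]
          constructor <;> [linarith [hz.1, hw.2]; linarith [hz.2, hw.1.le]]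
        rw [Real.norm_eq_abs]
        nlinarith [abs_nonneg (z - w)]
      have := intervalIntegral.norm_integral_le_of_norm_le_const hb
      simpa using this
    intro z
    rw [show deriv χ z = deriv χ (Int.fract z) from (per_fract hφper z).symm]
    exact key2 _ (fract_mem_Icc z)
  -- χ is within L of the identity
  have hψd : ∀ t : ℝ, DifferentiableAt ℝ (fun z => χ z - z) t := fun t =>
    (hχdiff t).sub differentiable_id.differentiableAt
  have hψd' : ∀ t : ℝ, HasDerivAt (fun z => χ z - z) (deriv χ t - 1) t := fun t =>
    (hχdiff t).hasDerivAt.sub (hasDerivAt_id t)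
  have hψderiv : ∀ t : ℝ, deriv (fun z => χ z - z) t = deriv χ t - 1 := fun t =>
    (hψd' t).deriv
  have hχ1b : ∀ z, |χ z - z| ≤ L := by
    have hχper : Function.Periodic (fun z => χ z - z) 1 := by
      intro z; simp only [hper1 z]; ring
    have key3 : ∀ z ∈ Icc (0:ℝ) 1, |χ z - z| ≤ L := by
      intro z hz
      have h := convex_univ.norm_image_sub_le_of_norm_deriv_le (f := fun z => χ z - z)
        (fun t _ => hψd t) (fun t _ => by rw [hψderiv t]; simpa using hφ1 t)
        (mem_univ (0:ℝ)) (mem_univ z)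
      have h' : |χ z - z| ≤ L * |z| := by
        simpa [hnorm, Real.norm_eq_abs] using h
      have hz1 : |z| ≤ 1 := by rw [abs_le]; exact ⟨by linarith [hz.1], hz.2⟩
      nlinarith [abs_nonneg z]
    intro z
    have hf : χ (Int.fract z) - Int.fract z = χ z - z := per_fract hχper z
    calc |χ z - z| = |χ (Int.fract z) - Int.fract z| := by rw [hf]
      _ ≤ L := key3 _ (fract_mem_Icc z)
  -- estimate on c via change of variables
  have hsub : ∫ x in (0:ℝ)..1, deriv χ x * g (χ x) = ∫ s in (0:ℝ)..1, g s := by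
    have h := integral_comp_smul_deriv (a := (0:ℝ)) (b := 1) (f := χ) (f' := deriv χ)
      (g := g) (fun x _ => (hχdiff x).hasDerivAt) hφcont.continuousOn hgc
    rw [hnorm, hχ1] at h
    simpa [smul_eq_mul, Function.comp] using h
  have hcdiff : c - (∫ s in (0:ℝ)..1, g s)
      = ∫ z in (0:ℝ)..1, (g (χ z) - deriv χ z * g (χ z)) := by
    rw [integral_sub (f := fun z => g (χ z)) (g := fun z => deriv χ z * g (χ z)) (hgχcont.intervalIntegrable 0 1)
      ((hφcont.mul hgχcont).intervalIntegrable 0 1), hsub, ← key]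
  have hcest : |c - ∫ s in (0:ℝ)..1, g s| ≤ M * L := by
    rw [hcdiff, ← Real.norm_eq_abs]
    have hb : ∀ z ∈ Set.uIoc (0:ℝ) 1, ‖g (χ z) - deriv χ z * g (χ z)‖ ≤ M * L := by
      intro z _
      rw [Real.norm_eq_abs]
      have e : g (χ z) - deriv χ z * g (χ z) = g (χ z) * (1 - deriv χ z) := by ring
      rw [e, abs_mul]
      have h1 : |g (χ z)| ≤ M := by
        rw [abs_of_pos (hpos (χ z))]; exact (hbd (χ z)).2
      have h2 : |1 - deriv χ z| ≤ L := by
        rw [abs_sub_comm]; exact hφ1 z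
      nlinarith [abs_nonneg (g (χ z)), abs_nonneg (1 - deriv χ z)]
    have := intervalIntegral.norm_integral_le_of_norm_le_const hb
    simpa using this
  -- combine
  have hL_le : L ≤ C₀ * (M + 1) / ‖p‖ ^ 2 := by
    rw [hLdef, div_le_div_iff₀ hp2pos hp2pos]
    nlinarith [mul_nonneg (mul_nonneg hC₀pos.le hM.le) hp2pos.le]
  have hML_le : M * L ≤ C₀ * (M + 1) / ‖p‖ ^ 2 := by
    rw [hLdef, mul_div_assoc', div_le_div_iff₀ hp2pos hp2pos]
    nlinarith [mul_nonneg hC₀pos.le hp2pos.le]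
  exact ⟨le_trans hcest hML_le, fun z => le_trans (hχ1b z) hL_le,
    fun z => le_trans (hφ1 z) hL_le⟩

/-- As `|p| → +∞`, `c̄(|p|) → ∫₀¹ g` and the correctors `χ_p` normalized by `χ_p(0) = 0`
satisfy `χ_p(z) → z` uniformly on `ℝ`, together with `χ_p'(z) → 1` uniformly on `ℝ`. -/
theorem statement_7 {n : ℕ} (g : ℝ → ℝ) (hg : ∃ K, LipschitzWith K g)
    (hper : ∀ y, g (y + 1) = g y) (hpos : ∀ y, 0 < g y)
    (cbar : EuclideanSpace ℝ (Fin n) → ℝ) (χfun : EuclideanSpace ℝ (Fin n) → ℝ → ℝ)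
    (hcorr : ∀ p, IsCorrector g p (cbar p) (χfun p))
    (hnorm : ∀ p, χfun p 0 = 0) :
    Tendsto cbar (comap (fun p : EuclideanSpace ℝ (Fin n) => ‖p‖) atTop)
      (𝓝 (∫ s in (0:ℝ)..1, g s)) ∧
    TendstoUniformly (fun p z => χfun p z) (fun z => z)
      (comap (fun p : EuclideanSpace ℝ (Fin n) => ‖p‖) atTop) ∧
    TendstoUniformly (fun p z => deriv (χfun p) z) (fun _ => 1)
      (comap (fun p : EuclideanSpace ℝ (Fin n) => ‖p‖) atTop) := by
  obtain ⟨K, hK⟩ := hg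
  have hgc : Continuous g := hK.continuous
  have hgper : Function.Periodic g 1 := hper
  obtain ⟨a, _, hamin⟩ := isCompact_Icc.exists_isMinOn (nonempty_Icc.2 zero_le_one)
    (hgc.continuousOn (s := Icc (0:ℝ) 1))
  obtain ⟨b, _, hbmax⟩ := isCompact_Icc.exists_isMaxOn (nonempty_Icc.2 zero_le_one)
    (hgc.continuousOn (s := Icc (0:ℝ) 1))
  obtain ⟨m, hmdef⟩ : ∃ m, m = g a := ⟨_, rfl⟩
  obtain ⟨M, hMdef⟩ : ∃ M, M = g b := ⟨_, rfl⟩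
  have hm : 0 < m := hmdef ▸ hpos a
  have hbd : ∀ y, m ≤ g y ∧ g y ≤ M := by
    intro y
    have hy : g (Int.fract y) = g y := per_fract hgper y
    exact ⟨hmdef ▸ hy ▸ hamin (fract_mem_Icc y), hMdef ▸ hy ▸ hbmax (fract_mem_Icc y)⟩
  have hM : 0 < M := hMdef ▸ hpos b
  obtain ⟨C, hCdef⟩ : ∃ C, C = (M * (M / m) + M) * (M + 1) := ⟨_, rfl⟩
  have hC0 : 0 < C := by rw [hCdef]; positivity
  have master : ∀ p : EuclideanSpace ℝ (Fin n), 1 ≤ ‖p‖ →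
      |cbar p - ∫ s in (0:ℝ)..1, g s| ≤ C / ‖p‖ ^ 2 ∧
      (∀ z, |χfun p z - z| ≤ C / ‖p‖ ^ 2) ∧
      (∀ z, |deriv (χfun p) z - 1| ≤ C / ‖p‖ ^ 2) := fun p hp => by
    rw [hCdef]
    exact corrector_estimate g hgc hgper hpos hm hbd p (cbar p) (χfun p) (hcorr p) (hnorm p) hp
  have hsmall : ∀ ε : ℝ, 0 < ε →
      ∀ᶠ p in comap (fun p : EuclideanSpace ℝ (Fin n) => ‖p‖) atTop,
        1 ≤ ‖p‖ ∧ C / ‖p‖ ^ 2 < ε := by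
    intro ε hε
    obtain ⟨R, hRdef⟩ : ∃ R, R = max 1 (C / ε + 1) := ⟨_, rfl⟩
    have hR1 : (1:ℝ) ≤ R := hRdef ▸ le_max_left _ _
    have hmem : {p : EuclideanSpace ℝ (Fin n) | R ≤ ‖p‖}
        ∈ comap (fun p : EuclideanSpace ℝ (Fin n) => ‖p‖) atTop :=
      preimage_mem_comap (mem_atTop R)
    filter_upwards [hmem] with p hpR
    have h1 : 1 ≤ ‖p‖ := le_trans hR1 hpR
    refine ⟨h1, ?_⟩
    have hRp : C / ε + 1 ≤ ‖p‖ := le_trans (hRdef ▸ le_max_right _ _) hpR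
    have hp2pos : (0:ℝ) < ‖p‖ ^ 2 := by nlinarith
    rw [div_lt_iff₀ hp2pos]
    have e1 : ε * (C / ε) = C := by field_simp
    nlinarith [sq_nonneg (‖p‖ - 1)]
  refine ⟨?_, ?_, ?_⟩
  · rw [Metric.tendsto_nhds]
    intro ε hε
    filter_upwards [hsmall ε hε] with p hp
    have := (master p hp.1).1
    rw [Real.dist_eq]
    linarith [hp.2]
  · rw [Metric.tendstoUniformly_iff]
    intro ε hε
    filter_upwards [hsmall ε hε] with p hp z
    have := (master p hp.1).2.1 z
    rw [Real.dist_eq, abs_sub_comm]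
    linarith [hp.2]
  · rw [Metric.tendstoUniformly_iff]
    intro ε hε
    filter_upwards [hsmall ε hε] with p hp z
    have := (master p hp.1).2.2 z
    rw [Real.dist_eq, abs_sub_comm]
    linarith [hp.2]
end
end

section
/- If χ is a corrector for (p, c) for some p ∈ ℝ^n, then for every z ∈ ℝ one has (min g)/(∫₀¹ g(s) ds) ≤ χ'(z) ≤ (max g)/(min g). -/
open Set Filter intervalIntegral
open scoped Topology

noncomputable section

theorem statement_8 {n : ℕ} (g : ℝ → ℝ) (hg : ∃ K, LipschitzWith K g)
    (hper : ∀ y, g (y + 1) = g y) (hpos : ∀ y, 0 < g y)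
    (m M : ℝ) (hm : IsLeast (Set.range g) m) (hM : IsGreatest (Set.range g) M)
    (p : EuclideanSpace ℝ (Fin n)) (c : ℝ) (χ : ℝ → ℝ)
    (hχ : IsCorrector g p c χ) :
    ∀ z : ℝ, m / (∫ s in (0:ℝ)..1, g s) ≤ deriv χ z ∧ deriv χ z ≤ M / m := by
  obtain ⟨K, hK⟩ := hg
  have hgc : Continuous g := hK.continuous
  obtain ⟨hC2, hw_pos, hper', heq⟩ := hχ
  set w := deriv χ with hwdef
  obtain ⟨y₀, hy₀⟩ := hm.1
  have hm_pos : 0 < m := hy₀ ▸ hpos y₀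
  have hχdiff : Differentiable ℝ χ := hC2.differentiable two_ne_zero
  have hχcont : Continuous χ := hχdiff.continuous
  have hC2' : ContDiff ℝ (1 + 1) χ := by
    have : (2 : WithTop ℕ∞) = 1 + 1 := by norm_num
    rwa [this] at hC2
  have hw1 : ContDiff ℝ 1 w := (contDiff_succ_iff_deriv.mp hC2').2.2
  have hwdiff : Differentiable ℝ w := hw1.differentiable one_ne_zero
  have hwcont : Continuous w := hwdiff.continuous
  have hw'cont : Continuous (deriv w) := hw1.continuous_deriv le_rfl
  -- periodicity of w
  have hwper : Function.Periodic w 1 := by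
    intro z
    have h1 : deriv (fun x => χ (x + 1)) z = deriv χ (z + 1) := deriv_comp_add_const χ 1 z
    have h2 : (fun x => χ (x + 1)) = fun x => χ x + 1 := funext hper'
    rw [h2, deriv_add_const] at h1
    exact h1.symm
  -- global extrema of w
  obtain ⟨z₀, _, hz₀⟩ := isCompact_Icc.exists_isMaxOn (nonempty_Icc.2 zero_le_one)
    hwcont.continuousOn
  obtain ⟨z₁, _, hz₁⟩ := isCompact_Icc.exists_isMinOn (nonempty_Icc.2 zero_le_one)
    hwcont.continuousOn
  have hfract : ∀ z : ℝ, w (Int.fract z) = w z := by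
    intro z
    have h := hwper.sub_zsmul_eq (x := z) ⌊z⌋
    have h2 : z - (⌊z⌋ : ℤ) • (1:ℝ) = Int.fract z := by
      rw [zsmul_eq_mul, mul_one, Int.self_sub_floor]
    rwa [h2] at h
  have hfract_mem : ∀ z : ℝ, Int.fract z ∈ Icc (0:ℝ) 1 :=
    fun z => ⟨Int.fract_nonneg z, (Int.fract_lt_one z).le⟩
  have hmax : ∀ z, w z ≤ w z₀ := fun z => (hfract z) ▸ hz₀ (hfract_mem z)
  have hmin : ∀ z, w z₁ ≤ w z := fun z => (hfract z) ▸ hz₁ (hfract_mem z)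
  have hz₀loc : IsLocalMax w z₀ := Filter.Eventually.of_forall hmax
  have hz₁loc : IsLocalMin w z₁ := Filter.Eventually.of_forall hmin
  have hz₀d : deriv w z₀ = 0 := hz₀loc.deriv_eq_zero
  have hz₁d : deriv w z₁ = 0 := hz₁loc.deriv_eq_zero
  have hz₀eq : c * w z₀ = g (χ z₀) := by have := heq z₀; rw [hz₀d] at this; linarith
  have hz₁eq : c * w z₁ = g (χ z₁) := by have := heq z₁; rw [hz₁d] at this; linarith
  have hc : 0 < c := by nlinarith [hw_pos z₀, hpos (χ z₀)]
  -- integrability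
  have int_w : IntervalIntegrable w MeasureTheory.volume 0 1 := hwcont.intervalIntegrable 0 1
  have int_w' : IntervalIntegrable (deriv w) MeasureTheory.volume 0 1 :=
    hw'cont.intervalIntegrable 0 1
  have int_gχ : IntervalIntegrable (fun z => g (χ z)) MeasureTheory.volume 0 1 :=
    (hgc.comp hχcont).intervalIntegrable 0 1
  have int_w2 : IntervalIntegrable (fun z => w z ^ 2) MeasureTheory.volume 0 1 :=
    (hwcont.pow 2).intervalIntegrable 0 1
  have int_w'w : IntervalIntegrable (fun z => deriv w z * w z) MeasureTheory.volume 0 1 :=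
    (hw'cont.mul hwcont).intervalIntegrable 0 1
  -- ∫ w' = 0
  have hI1 : ∫ z in (0:ℝ)..1, deriv w z = 0 := by
    rw [integral_deriv_eq_sub (fun x _ => hwdiff x) int_w']
    have h := hwper 0
    rw [zero_add] at h
    rw [h, sub_self]
  -- ∫ w = 1
  have hI2 : ∫ z in (0:ℝ)..1, w z = 1 := by
    rw [integral_deriv_eq_sub (fun x _ => hχdiff x) int_w]
    have h := hper' 0
    rw [zero_add] at h
    rw [h]; ring
  have hgchi : ∀ z, g (χ z) = c * w z - ‖p‖ ^ 2 * deriv w z := by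
    intro z; have := heq z; linarith
  -- c = ∫ g(χ)
  have hJ : (∫ z in (0:ℝ)..1, g (χ z)) = c := by
    simp_rw [hgchi]
    rw [intervalIntegral.integral_sub (f := fun z => c * w z) (g := fun z => ‖p‖ ^ 2 * deriv w z) ((continuous_const.mul hwcont).intervalIntegrable 0 1)
      ((continuous_const.mul hw'cont).intervalIntegrable 0 1),
      intervalIntegral.integral_const_mul, intervalIntegral.integral_const_mul, hI1, hI2]
    ring
  have hcm : m ≤ c := by
    rw [← hJ]
    calc m = ∫ _ in (0:ℝ)..1, m := by simp
      _ ≤ _ := intervalIntegral.integral_mono_on zero_le_one intervalIntegrable_const int_gχ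
          (fun x _ => hm.2 ⟨χ x, rfl⟩)
  -- ∫ w' w = 0
  have hww' : ∫ z in (0:ℝ)..1, deriv w z * w z = 0 := by
    have hder : ∀ x : ℝ, HasDerivAt (fun z => w z ^ 2) (2 * w x * deriv w x) x := by
      intro x
      have h := (hwdiff x).hasDerivAt.pow 2; simp at h; exact h
    have hsq : ∫ z in (0:ℝ)..1, 2 * w z * deriv w z = w 1 ^ 2 - w 0 ^ 2 :=
      intervalIntegral.integral_eq_sub_of_hasDerivAt (fun x _ => hder x)
        (((continuous_const.mul hwcont).mul hw'cont).intervalIntegrable 0 1)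
    have h := hwper 0
    rw [zero_add] at h
    rw [h, sub_self] at hsq
    have h2 : ∫ z in (0:ℝ)..1, 2 * w z * deriv w z
        = 2 * ∫ z in (0:ℝ)..1, deriv w z * w z := by
      rw [← intervalIntegral.integral_const_mul]
      congr 1; funext z; ring
    rw [h2] at hsq; linarith
  -- change of variables : ∫ g(χ) w = ∫₀¹ g
  have hgper : Function.Periodic g 1 := hper
  have hcv : (∫ z in (0:ℝ)..1, g (χ z) * w z) = ∫ s in (0:ℝ)..1, g s := by
    have h := intervalIntegral.integral_comp_mul_deriv (a := (0:ℝ)) (b := 1) (f := χ) (f' := w)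
      (g := g) (fun x _ => (hχdiff x).hasDerivAt) hwcont.continuousOn hgc
    have hχ1 : χ 1 = χ 0 + 1 := by have := hper' 0; rwa [zero_add] at this
    rw [hχ1, hgper.intervalIntegral_add_eq (χ 0) 0] at h
    rw [zero_add] at h
    exact h
  -- c * ∫ w² = ∫₀¹ g
  have hQ : c * (∫ z in (0:ℝ)..1, w z ^ 2) = ∫ s in (0:ℝ)..1, g s := by
    rw [← hcv]
    have hptw : ∀ z, g (χ z) * w z = c * w z ^ 2 - ‖p‖ ^ 2 * (deriv w z * w z) := by
      intro z; rw [hgchi z]; ring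
    simp_rw [hptw]
    rw [intervalIntegral.integral_sub (f := fun z => c * w z ^ 2) (g := fun z => ‖p‖ ^ 2 * (deriv w z * w z)) ((continuous_const.mul (hwcont.pow 2)).intervalIntegrable 0 1)
      ((continuous_const.mul (hw'cont.mul hwcont)).intervalIntegrable 0 1),
      intervalIntegral.integral_const_mul, intervalIntegral.integral_const_mul, hww']
    ring
  -- ∫ w² ≥ 1
  have hw2 : 1 ≤ ∫ z in (0:ℝ)..1, w z ^ 2 := by
    have h0 : 0 ≤ ∫ z in (0:ℝ)..1, (w z - 1) ^ 2 :=
      intervalIntegral.integral_nonneg zero_le_one (fun x _ => sq_nonneg _)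
    have hexp : (∫ z in (0:ℝ)..1, (w z - 1) ^ 2)
        = (∫ z in (0:ℝ)..1, w z ^ 2) - 2 * (∫ z in (0:ℝ)..1, w z) + 1 := by
      have hpt : ∀ z, (w z - 1) ^ 2 = (w z ^ 2 - 2 * w z) + 1 := fun z => by ring
      simp_rw [hpt]
      rw [intervalIntegral.integral_add (f := fun z => w z ^ 2 - 2 * w z) (int_w2.sub ((continuous_const.mul hwcont).intervalIntegrable 0 1))
        intervalIntegrable_const,
        intervalIntegral.integral_sub (g := fun z => 2 * w z) int_w2 ((continuous_const.mul hwcont).intervalIntegrable 0 1),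
        intervalIntegral.integral_const_mul]
      simp
    rw [hexp, hI2] at h0; linarith
  have hIg_pos : 0 < ∫ s in (0:ℝ)..1, g s := by nlinarith
  have hcI : c ≤ ∫ s in (0:ℝ)..1, g s := by nlinarith
  -- conclusion
  intro z
  constructor
  · rw [div_le_iff₀ hIg_pos]
    have hmle : m ≤ g (χ z₁) := hm.2 ⟨χ z₁, rfl⟩
    nlinarith [hmin z, hw_pos z, hw_pos z₁,
      mul_nonneg (sub_nonneg.2 hcI) (hw_pos z).le,
      mul_nonneg hc.le (sub_nonneg.2 (hmin z))]
  · rw [le_div_iff₀ hm_pos]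
    have hMge : g (χ z₀) ≤ M := hM.2 ⟨χ z₀, rfl⟩
    have : w z * m ≤ w z₀ * c := mul_le_mul (hmax z) hcm hm_pos.le (hw_pos z₀).le
    nlinarith
end
end

section
/- Let c > 0, a > 0, and let h : [0, ∞) → ℝ be a C² function with h(0) = 0, h'(0) = a, satisfying h''(z) + c·h'(z) − g(h(z)) = 0 for all z > 0. Then for every z ≥ 0: a·e^{−cz} + (min g / c)·(1 − e^{−cz}) ≤ h'(z) ≤ a·e^{−cz} + (max g / c)·(1 − e^{−cz}); in particular h'(z) > 0 for all z ≥ 0. -/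
open Set Filter
open scoped Topology

noncomputable section

theorem statement_9 (g : ℝ → ℝ) (hg : ∃ K, LipschitzWith K g)
    (hper : ∀ y, g (y + 1) = g y) (hpos : ∀ y, 0 < g y)
    (m M : ℝ) (hm : IsLeast (Set.range g) m) (hM : IsGreatest (Set.range g) M)
    (c a : ℝ) (hc : 0 < c) (ha : 0 < a)
    (h : ℝ → ℝ) (hsm : ContDiff ℝ 2 h) (h0 : h 0 = 0) (h'0 : deriv h 0 = a)
    (hode : ∀ z, 0 < z → deriv (deriv h) z + c * deriv h z - g (h z) = 0) :
    ∀ z, 0 ≤ z →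
      (a * Real.exp (-(c * z)) + (m / c) * (1 - Real.exp (-(c * z))) ≤ deriv h z ∧
        deriv h z ≤ a * Real.exp (-(c * z)) + (M / c) * (1 - Real.exp (-(c * z)))) ∧
      0 < deriv h z := by
  -- m > 0
  obtain ⟨y, hy⟩ := hm.1
  have hm0 : 0 < m := hy ▸ hpos y
  -- derivative of deriv h
  have hd1 : ContDiff ℝ 1 (deriv h) := by
    have := (contDiff_succ_iff_deriv (n := 1)).mp (by exact_mod_cast hsm)
    exact this.2.2
  have hdiffh : Differentiable ℝ h :=
    ((contDiff_succ_iff_deriv (n := 1)).mp (by exact_mod_cast hsm)).1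
  have hu : ∀ x, HasDerivAt (deriv h) (deriv (deriv h) x) x := fun x =>
    (hd1.differentiable one_ne_zero x).hasDerivAt
  have hexp : ∀ x : ℝ, HasDerivAt (fun t => Real.exp (c * t)) (Real.exp (c * x) * c) x := by
    intro x
    simpa using ((hasDerivAt_id x).const_mul c).exp
  -- auxiliary functions
  set F : ℝ → ℝ := fun t => Real.exp (c * t) * deriv h t - (m / c) * (Real.exp (c * t) - 1)
    with hF
  set G : ℝ → ℝ := fun t => (M / c) * (Real.exp (c * t) - 1) - Real.exp (c * t) * deriv h t
    with hG
  have hFd : ∀ x, HasDerivAt F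
      (Real.exp (c * x) * c * deriv h x + Real.exp (c * x) * deriv (deriv h) x
        - (m / c) * (Real.exp (c * x) * c)) x := by
    intro x
    exact ((hexp x).mul (hu x)).sub (((hexp x).sub_const 1).const_mul (m / c))
  have hGd : ∀ x, HasDerivAt G
      ((M / c) * (Real.exp (c * x) * c)
        - (Real.exp (c * x) * c * deriv h x + Real.exp (c * x) * deriv (deriv h) x)) x := by
    intro x
    exact (((hexp x).sub_const 1).const_mul (M / c)).sub ((hexp x).mul (hu x))
  intro z hz
  rcases eq_or_lt_of_le hz with rfl | hz'
  · simp [h'0, ha]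
  -- value at 0
  have hF0 : F 0 = a := by simp [hF, h'0]
  have hG0 : G 0 = -a := by simp [hG, h'0]
  have hmonF : MonotoneOn F (Icc 0 z) := by
    apply monotoneOn_of_deriv_nonneg (convex_Icc 0 z)
    · exact fun x _ => ((hFd x).continuousAt).continuousWithinAt
    · exact fun x _ => ((hFd x).differentiableAt).differentiableWithinAt
    · intro x hx
      rw [interior_Icc] at hx
      rw [(hFd x).deriv]
      have hode' := hode x hx.1
      have hgm : m ≤ g (h x) := hm.2 ⟨h x, rfl⟩
      have hE : 0 < Real.exp (c * x) := Real.exp_pos _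
      have : deriv (deriv h) x = g (h x) - c * deriv h x := by linarith
      rw [this]
      have hc' : (m / c) * c = m := div_mul_cancel₀ m (ne_of_gt hc)
      nlinarith [mul_le_mul_of_nonneg_left hgm (le_of_lt hE)]
  have hmonG : MonotoneOn G (Icc 0 z) := by
    apply monotoneOn_of_deriv_nonneg (convex_Icc 0 z)
    · exact fun x _ => ((hGd x).continuousAt).continuousWithinAt
    · exact fun x _ => ((hGd x).differentiableAt).differentiableWithinAt
    · intro x hx
      rw [interior_Icc] at hx
      rw [(hGd x).deriv]
      have hode' := hode x hx.1
      have hgM : g (h x) ≤ M := hM.2 ⟨h x, rfl⟩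
      have hE : 0 < Real.exp (c * x) := Real.exp_pos _
      have : deriv (deriv h) x = g (h x) - c * deriv h x := by linarith
      rw [this]
      have hc' : (M / c) * c = M := div_mul_cancel₀ M (ne_of_gt hc)
      nlinarith [mul_le_mul_of_nonneg_left hgM (le_of_lt hE)]
  have hFle : F 0 ≤ F z := hmonF (left_mem_Icc.mpr hz) (right_mem_Icc.mpr hz) hz
  have hGle : G 0 ≤ G z := hmonG (left_mem_Icc.mpr hz) (right_mem_Icc.mpr hz) hz
  rw [hF0] at hFle
  rw [hG0] at hGle
  set E := Real.exp (c * z) with hE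
  set E' := Real.exp (-(c * z)) with hE'
  have hEE' : E * E' = 1 := by
    rw [hE, hE', ← Real.exp_add]; simp
  have hE'pos : 0 < E' := Real.exp_pos _
  have hEpos : 0 < E := Real.exp_pos _
  have hE'le1 : E' ≤ 1 := Real.exp_le_one_iff.mpr (by nlinarith)
  have hlow : a * E' + (m / c) * (1 - E') ≤ deriv h z := by
    simp only [hF] at hFle
    rw [← hE] at hFle
    have step := mul_le_mul_of_nonneg_left hFle (le_of_lt hE'pos)
    have key : E' * (E * deriv h z - m / c * (E - 1))
        = deriv h z - m / c * (1 - E') := by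
      have : E' * (E * deriv h z - m / c * (E - 1))
          = (E * E') * deriv h z - m / c * ((E * E') - E') := by ring
      rw [this, hEE']; ring
    rw [key] at step
    linarith
  have hhigh : deriv h z ≤ a * E' + (M / c) * (1 - E') := by
    simp only [hG] at hGle
    rw [← hE] at hGle
    have step := mul_le_mul_of_nonneg_left hGle (le_of_lt hE'pos)
    have key : E' * (M / c * (E - 1) - E * deriv h z)
        = M / c * (1 - E') - deriv h z := by
      have : E' * (M / c * (E - 1) - E * deriv h z)
          = M / c * ((E * E') - E') - (E * E') * deriv h z := by ring
      rw [this, hEE']; ring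
    rw [key] at step
    linarith
  have hposd : 0 < deriv h z := by
    have h1 : 0 < a * E' := mul_pos ha hE'pos
    have h2 : 0 ≤ (m / c) * (1 - E') :=
      mul_nonneg (le_of_lt (div_pos hm0 hc)) (by linarith)
    linarith
  exact ⟨⟨hlow, hhigh⟩, hposd⟩
end
end

section
/- Let α ≥ 0 with α ≠ 1, ε > 0, and p ∈ ℝ^n. A C² function χ : ℝ → ℝ with χ' > 0 and χ(z+1) = χ(z) + 1 satisfies ε^{α−1}·|p|²·χ''(z) − c·χ'(z) + g(χ(z)) = 0 for all z if and only if χ is a corrector for (ε^{(α−1)/2} p, c); consequently the unique constant for this scaled cell problem is c_α^ε(|p|) = c̄(ε^{(α−1)/2}|p|). Moreover, if α > 1 then lim_{ε→0⁺} c_α^ε(|p|) = (∫₀¹ 1/g(s) ds)⁻¹ for every p ∈ ℝ^n, while if 0 ≤ α < 1 then lim_{ε→0⁺} c_α^ε(|p|) = ∫₀¹ g(s) ds for every p ≠ 0 and c_α^ε(0) = (∫₀¹ 1/g(s) ds)⁻¹. -/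
open Set Filter intervalIntegral
open scoped Topology

noncomputable section

lemma gronwall_aux {lam A M U : ℝ} (hlam : 0 < lam) (hA : 0 ≤ A) {u u' : ℝ → ℝ}
    (hu : ∀ t, HasDerivAt u (u' t) t) (h0 : u 0 = 0)
    (hbd : ∀ t, |u t| ≤ U)
    (hineq : ∀ t, 0 ≤ t → M + lam * u t - A * t ≤ u' t) :
    M ≤ A / lam := by
  set w : ℝ → ℝ := fun t => Real.exp (-lam * t) * u t + (M / lam) * Real.exp (-lam * t)
    - (A / lam) * (t * Real.exp (-lam * t)) - (A / lam ^ 2) * Real.exp (-lam * t) with hw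
  have hexp : ∀ t : ℝ, HasDerivAt (fun s => Real.exp (-lam * s)) (-lam * Real.exp (-lam * t)) t := by
    intro t
    have h1 : HasDerivAt (fun s : ℝ => -lam * s) (-lam) t := by
      simpa using (hasDerivAt_id t).const_mul (-lam)
    simpa [mul_comm] using h1.exp
  have hwderiv : ∀ t, HasDerivAt w
      (Real.exp (-lam * t) * (u' t - lam * u t - M + A * t)) t := by
    intro t
    have h1 : HasDerivAt (fun s => Real.exp (-lam * s) * u s)
        ((-lam * Real.exp (-lam * t)) * u t + Real.exp (-lam * t) * u' t) t :=
      (hexp t).mul (hu t)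
    have h2 : HasDerivAt (fun s => (M / lam) * Real.exp (-lam * s))
        ((M / lam) * (-lam * Real.exp (-lam * t))) t := (hexp t).const_mul _
    have h3 : HasDerivAt (fun s => (A / lam) * (s * Real.exp (-lam * s)))
        ((A / lam) * (1 * Real.exp (-lam * t) + t * (-lam * Real.exp (-lam * t)))) t :=
      ((hasDerivAt_id t).mul (hexp t)).const_mul _
    have h4 : HasDerivAt (fun s => (A / lam ^ 2) * Real.exp (-lam * s))
        ((A / lam ^ 2) * (-lam * Real.exp (-lam * t))) t := (hexp t).const_mul _
    have := ((h1.add h2).sub h3).sub h4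
    refine this.congr_deriv ?_
    linear_combination (-(M * Real.exp (-lam * t) - A * t * Real.exp (-lam * t) - A / lam * Real.exp (-lam * t))) * (div_self hlam.ne' : lam / lam = 1)
  have hmono : MonotoneOn w (Ici (0:ℝ)) := by
    apply monotoneOn_of_deriv_nonneg (convex_Ici 0)
      (fun t _ => (hwderiv t).continuousAt.continuousWithinAt)
      (fun t _ => ((hwderiv t).differentiableAt).differentiableWithinAt)
    intro t ht
    rw [(hwderiv t).deriv]
    have ht' : (0:ℝ) ≤ t := le_of_lt (by simpa using ht)
    have := hineq t ht'
    have hE : 0 ≤ Real.exp (-lam * t) := (Real.exp_pos _).le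
    nlinarith [this, hE]
  have hw0 : w 0 = M / lam - A / lam ^ 2 := by simp [hw, h0]
  have hwle : ∀ t ∈ Ici (0:ℝ), w t ≤ Real.exp (-lam * t) * (U + |M| / lam) := by
    intro t ht
    have ht' : (0:ℝ) ≤ t := ht
    have hE : 0 < Real.exp (-lam * t) := Real.exp_pos _
    have h1 : Real.exp (-lam * t) * u t ≤ Real.exp (-lam * t) * U :=
      mul_le_mul_of_nonneg_left ((le_abs_self _).trans (hbd t)) hE.le
    have h2 : (M / lam) * Real.exp (-lam * t) ≤ (|M| / lam) * Real.exp (-lam * t) := by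
      apply mul_le_mul_of_nonneg_right _ hE.le
      gcongr; exact le_abs_self M
    have h3 : 0 ≤ (A / lam) * (t * Real.exp (-lam * t)) := by positivity
    have h4 : 0 ≤ (A / lam ^ 2) * Real.exp (-lam * t) := by positivity
    have := hbd 0
    nlinarith
  have hlim : Tendsto (fun t => Real.exp (-lam * t) * (U + |M| / lam)) atTop (𝓝 0) := by
    have h1 : Tendsto (fun t : ℝ => -lam * t) atTop atBot :=
      tendsto_id.const_mul_atTop_of_neg (neg_lt_zero.mpr hlam)
    have := (Real.tendsto_exp_atBot.comp h1).mul_const (U + |M| / lam)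
    simpa using this
  have key : M / lam - A / lam ^ 2 ≤ 0 := by
    apply ge_of_tendsto hlim
    filter_upwards [eventually_ge_atTop (0:ℝ)] with t ht
    calc M / lam - A / lam ^ 2 = w 0 := hw0.symm
    _ ≤ w t := hmono (le_refl (0:ℝ)) ht ht
    _ ≤ _ := hwle t ht
  rw [div_sub_div _ _ (ne_of_gt hlam) (ne_of_gt (pow_pos hlam 2))] at key
  have h2 : M * lam ^ 2 - lam * A ≤ 0 := by
    have := div_nonpos_iff.mp key
    rcases this with ⟨h, _⟩ | ⟨h, h'⟩
    · nlinarith [hlam, pow_pos hlam 2]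
    · exact h
  rw [le_div_iff₀ hlam]
  nlinarith [hlam]

lemma exists_min_max {g : ℝ → ℝ} (hg : Continuous g) (hper : Function.Periodic g 1)
    (hpos : ∀ y, 0 < g y) :
    ∃ gmin gmax : ℝ, 0 < gmin ∧ (∀ y, gmin ≤ g y) ∧ (∀ y, g y ≤ gmax) := by
  obtain ⟨a, _, ha⟩ := isCompact_Icc.exists_isMinOn (α := ℝ) (s := Icc (0:ℝ) 1)
    (nonempty_Icc.mpr zero_le_one) hg.continuousOn
  obtain ⟨b, _, hb⟩ := isCompact_Icc.exists_isMaxOn (α := ℝ) (s := Icc (0:ℝ) 1)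
    (nonempty_Icc.mpr zero_le_one) hg.continuousOn
  refine ⟨g a, g b, hpos a, fun y => ?_, fun y => ?_⟩
  · have h1 : g y = g (Int.fract y) := by
      have := hper.int_mul_eq (n := ⌊y⌋)
      have h2 : Int.fract y + ⌊y⌋ * 1 = y := by rw [mul_one]; rw [Int.fract]; ring
      calc g y = g (Int.fract y + ⌊y⌋ * 1) := by rw [h2]
      _ = g (Int.fract y) := hper.int_mul ⌊y⌋ (Int.fract y)
    rw [h1]
    exact ha (mem_Icc.mpr ⟨Int.fract_nonneg y, (Int.fract_lt_one y).le⟩)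
  · have h1 : g y = g (Int.fract y) := by
      have h2 : Int.fract y + ⌊y⌋ * 1 = y := by rw [mul_one]; rw [Int.fract]; ring
      calc g y = g (Int.fract y + ⌊y⌋ * 1) := by rw [h2]
      _ = g (Int.fract y) := hper.int_mul ⌊y⌋ (Int.fract y)
    rw [h1]
    exact hb (mem_Icc.mpr ⟨Int.fract_nonneg y, (Int.fract_lt_one y).le⟩)

section facts
variable {n : ℕ} {g : ℝ → ℝ} {q : EuclideanSpace ℝ (Fin n)} {c : ℝ} {χ : ℝ → ℝ}

lemma chi_diff (hc : IsCorrector g q c χ) : Differentiable ℝ χ :=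
  hc.1.differentiable (by norm_num)

lemma chi_d1 (hc : IsCorrector g q c χ) : Differentiable ℝ (deriv χ) := by
  have h := (contDiff_succ_iff_deriv (n := 1)).mp (by exact_mod_cast hc.1)
  exact h.2.2.differentiable (by norm_num)

lemma chi_d2_cont (hc : IsCorrector g q c χ) : Continuous (deriv (deriv χ)) := by
  have h := (contDiff_succ_iff_deriv (n := 1)).mp (by exact_mod_cast hc.1)
  exact (contDiff_one_iff_deriv.mp h.2.2).2

lemma chi_d1_cont (hc : IsCorrector g q c χ) : Continuous (deriv χ) :=
  (chi_d1 hc).continuous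

/-- periodicity of the derivative -/
lemma chi_deriv_periodic (hc : IsCorrector g q c χ) : Function.Periodic (deriv χ) 1 := by
  intro z
  have h : (fun z => χ (z + 1)) = fun z => χ z + 1 := funext hc.2.2.1
  have h1 : deriv (fun z => χ (z + 1)) z = deriv χ (z + 1) := by
    simpa using deriv_comp_add_const χ 1 z
  have h2 : deriv (fun z => χ z + 1) z = deriv χ z := by
    simp [deriv_add_const]
  rw [← h1, h, h2]

/-- χ (z + t) - χ z as interval integral of deriv χ; more useful: FTC -/
lemma chi_integral_deriv (hc : IsCorrector g q c χ) (a b : ℝ) :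
    ∫ s in a..b, deriv χ s = χ b - χ a :=
  integral_deriv_eq_sub (fun x _ => (chi_diff hc).differentiableAt)
    ((chi_d1_cont hc).intervalIntegrable a b)

lemma chi_integral_one (hc : IsCorrector g q c χ) : ∫ s in (0:ℝ)..1, deriv χ s = 1 := by
  rw [chi_integral_deriv hc]
  have := hc.2.2.1 0
  simp at this ⊢
  linarith

end facts

section bounds
variable {n : ℕ} {g : ℝ → ℝ} {q : EuclideanSpace ℝ (Fin n)} {c : ℝ} {χ : ℝ → ℝ}
  {gmin gmax : ℝ}

lemma periodic_exists_max {f : ℝ → ℝ} (hf : Continuous f) (hp : Function.Periodic f 1) :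
    ∃ z0, ∀ z, f z ≤ f z0 := by
  obtain ⟨b, _, hb⟩ := isCompact_Icc.exists_isMaxOn (α := ℝ) (s := Icc (0:ℝ) 1)
    (nonempty_Icc.mpr zero_le_one) hf.continuousOn
  refine ⟨b, fun y => ?_⟩
  have h2 : Int.fract y + ⌊y⌋ * 1 = y := by rw [mul_one, Int.fract]; ring
  calc f y = f (Int.fract y + ⌊y⌋ * 1) := by rw [h2]
  _ = f (Int.fract y) := hp.int_mul ⌊y⌋ (Int.fract y)
  _ ≤ f b := hb (mem_Icc.mpr ⟨Int.fract_nonneg y, (Int.fract_lt_one y).le⟩)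

lemma corrector_bounds (hgmin : 0 < gmin) (hmin : ∀ y, gmin ≤ g y) (hmax : ∀ y, g y ≤ gmax)
    (hc : IsCorrector g q c χ) :
    0 < c ∧ gmin ≤ c ∧ c ≤ gmax ∧ (∀ z, deriv χ z ≤ gmax / c) ∧ (∀ z, gmin / c ≤ deriv χ z) := by
  obtain ⟨zM, hzM⟩ := periodic_exists_max (chi_d1_cont hc) (chi_deriv_periodic hc)
  have hperneg : Function.Periodic (fun z => -deriv χ z) 1 := fun z => by
    simp [chi_deriv_periodic hc z]
  obtain ⟨zm, hzm⟩ := periodic_exists_max (chi_d1_cont hc).neg hperneg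
  have hzm' : ∀ z, deriv χ zm ≤ deriv χ z := fun z => by have := hzm z; simpa using this
  -- second derivative vanishes at extrema
  have hM0 : deriv (deriv χ) zM = 0 :=
    (IsLocalMax.deriv_eq_zero (Filter.Eventually.of_forall hzM))
  have hm0 : deriv (deriv χ) zm = 0 := by
    have : IsLocalMin (deriv χ) zm := Filter.Eventually.of_forall hzm'
    exact this.deriv_eq_zero
  have heqM : c * deriv χ zM = g (χ zM) := by have := hc.2.2.2 zM; rw [hM0] at this; linarith
  have heqm : c * deriv χ zm = g (χ zm) := by have := hc.2.2.2 zm; rw [hm0] at this; linarith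
  -- M1 ≥ 1 ≥ m1
  have hint : ∫ s in (0:ℝ)..1, deriv χ s = 1 := chi_integral_one hc
  have hM1 : (1:ℝ) ≤ deriv χ zM := by
    have h1 : ∫ s in (0:ℝ)..1, deriv χ s ≤ ∫ _ in (0:ℝ)..1, deriv χ zM :=
      intervalIntegral.integral_mono_on zero_le_one ((chi_d1_cont hc).intervalIntegrable 0 1)
        (intervalIntegrable_const) (fun x _ => hzM x)
    rw [hint] at h1; simpa using h1
  have hm1 : deriv χ zm ≤ 1 := by
    have h1 : ∫ _ in (0:ℝ)..1, deriv χ zm ≤ ∫ s in (0:ℝ)..1, deriv χ s :=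
      intervalIntegral.integral_mono_on zero_le_one (intervalIntegrable_const)
        ((chi_d1_cont hc).intervalIntegrable 0 1) (fun x _ => hzm' x)
    rw [hint] at h1; simpa using h1
  have hMpos := hc.2.1 zM
  have hmpos := hc.2.1 zm
  have hgM : gmin ≤ g (χ zM) := hmin _
  have hcpos : 0 < c := by nlinarith
  refine ⟨hcpos, ?_, ?_, ?_, ?_⟩
  · -- gmin ≤ c : c ≥ c * (deriv χ zm) = g (χ zm) ≥ gmin, using deriv χ zm ≤ 1
    nlinarith [hmin (χ zm)]
  · -- c ≤ gmax
    nlinarith [hmax (χ zM)]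
  · intro z
    rw [le_div_iff₀ hcpos]
    calc deriv χ z * c = c * deriv χ z := mul_comm _ _
    _ ≤ c * deriv χ zM := by nlinarith [hzM z]
    _ = g (χ zM) := heqM
    _ ≤ gmax := hmax _
  · intro z
    rw [div_le_iff₀ hcpos]
    calc gmin ≤ g (χ zm) := hmin _
    _ = c * deriv χ zm := heqm.symm
    _ ≤ c * deriv χ z := by nlinarith [hzm' z]
    _ = deriv χ z * c := mul_comm _ _
end bounds

section psi
variable {n : ℕ} {g : ℝ → ℝ} {q : EuclideanSpace ℝ (Fin n)} {c : ℝ} {χ : ℝ → ℝ}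
  {gmin gmax : ℝ} {K : NNReal}

lemma lip_real (hg : LipschitzWith K g) (x y : ℝ) : |g x - g y| ≤ (K:ℝ) * |x - y| := by
  have := hg.dist_le_mul x y
  simpa [Real.dist_eq] using this

lemma chi_diff_bound (hgmin : 0 < gmin) (hmin : ∀ y, gmin ≤ g y) (hmax : ∀ y, g y ≤ gmax)
    (hc : IsCorrector g q c χ) (z₀ t : ℝ) (ht : 0 ≤ t) :
    0 ≤ χ (z₀ + t) - χ z₀ ∧ χ (z₀ + t) - χ z₀ ≤ gmax / c * t := by
  obtain ⟨hcpos, _, _, hub, hlb⟩ := corrector_bounds hgmin hmin hmax hc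
  have h1 : χ (z₀ + t) - χ z₀ = ∫ s in z₀..(z₀ + t), deriv χ s := (chi_integral_deriv hc _ _).symm
  constructor
  · rw [h1]
    apply intervalIntegral.integral_nonneg (by linarith)
    exact fun s _ => (hc.2.1 s).le
  · rw [h1]
    have h2 : ∫ s in z₀..(z₀+t), deriv χ s ≤ ∫ _ in z₀..(z₀+t), gmax / c :=
      intervalIntegral.integral_mono_on (by linarith) ((chi_d1_cont hc).intervalIntegrable _ _)
        intervalIntegrable_const (fun x _ => hub x)
    simp at h2
    calc ∫ s in z₀..(z₀+t), deriv χ s ≤ t * gmax / c := by linarith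
    _ = gmax / c * t := by ring

lemma psi_bound (hg : LipschitzWith K g) (hgmin : 0 < gmin) (hmin : ∀ y, gmin ≤ g y)
    (hmax : ∀ y, g y ≤ gmax) (hc : IsCorrector g q c χ) (z₀ : ℝ) :
    |c * deriv χ z₀ - g (χ z₀)| ≤ ‖q‖ ^ 2 * ((K:ℝ) * gmax) / c ^ 2 := by
  obtain ⟨hcpos, hcmin, hcmax, hub, hlb⟩ := corrector_bounds hgmin hmin hmax hc
  have hgmax : 0 < gmax := lt_of_lt_of_le hgmin (le_trans (hmin 0) (hmax 0))
  have hψ : ∀ z, c * deriv χ z - g (χ z) = ‖q‖ ^ 2 * deriv (deriv χ) z := by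
    intro z; have := hc.2.2.2 z; linarith
  by_cases hq : ‖q‖ ^ 2 = 0
  · rw [hψ z₀, hq]; simp
  have hδ2 : 0 < ‖q‖ ^ 2 := lt_of_le_of_ne (by positivity) (Ne.symm hq)
  set δ2 := ‖q‖ ^ 2 with hδ2def
  set lam := c / δ2 with hlam
  have hlampos : 0 < lam := div_pos hcpos hδ2
  set A := (K:ℝ) * gmax / c with hA
  have hApos : 0 ≤ A := by positivity
  set U := δ2 * (gmax / c) with hU
  -- derivative setup
  have hud : ∀ z₀ t, HasDerivAt (fun t => δ2 * (deriv χ (z₀ + t) - deriv χ z₀))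
      (δ2 * deriv (deriv χ) (z₀ + t)) t := by
    intro z₀ t
    have h1 : HasDerivAt (fun t : ℝ => z₀ + t) 1 t := by
      simpa using (hasDerivAt_id t).const_add z₀
    have h2 : HasDerivAt (fun t => deriv χ (z₀ + t)) (deriv (deriv χ) (z₀ + t) * 1) t :=
      ((chi_d1 hc (z₀ + t)).hasDerivAt).comp t h1
    simpa using (h2.sub_const (deriv χ z₀)).const_mul δ2
  have hubd : ∀ z₀ t : ℝ, |δ2 * (deriv χ (z₀ + t) - deriv χ z₀)| ≤ U := by
    intro z₀ t
    rw [abs_mul, abs_of_pos hδ2, hU]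
    apply mul_le_mul_of_nonneg_left _ hδ2.le
    rw [abs_le]
    constructor
    · have := hub z₀; have := hc.2.1 (z₀ + t); linarith
    · have := hub (z₀ + t); have := hc.2.1 z₀; linarith
  have hgdiff : ∀ z₀ t, 0 ≤ t → |g (χ (z₀ + t)) - g (χ z₀)| ≤ A * t := by
    intro z₀ t ht
    obtain ⟨h1, h2⟩ := chi_diff_bound hgmin hmin hmax hc z₀ t ht
    calc |g (χ (z₀ + t)) - g (χ z₀)| ≤ (K:ℝ) * |χ (z₀ + t) - χ z₀| := lip_real hg _ _
    _ ≤ (K:ℝ) * (gmax / c * t) := by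
        apply mul_le_mul_of_nonneg_left _ K.coe_nonneg
        rw [abs_of_nonneg h1]; exact h2
    _ = A * t := by rw [hA]; ring
  have hAlam : A / lam = δ2 * ((K:ℝ) * gmax) / c ^ 2 := by
    rw [hA, hlam]
    field_simp
  have hueq : ∀ t : ℝ, lam * (δ2 * (deriv χ (z₀ + t) - deriv χ z₀))
      = c * (deriv χ (z₀ + t) - deriv χ z₀) := by
    intro t
    rw [hlam]
    field_simp
  have hmax' : c * deriv χ z₀ - g (χ z₀) ≤ δ2 * ((K:ℝ) * gmax) / c ^ 2 := by
    rw [← hAlam]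
    apply gronwall_aux hlampos hApos (hud z₀) (by simp) (hubd z₀)
    intro t ht
    have habs := abs_le.mp (hgdiff z₀ t ht)
    have h1 := hueq t
    have h2 := hψ (z₀ + t)
    have h3 := hψ z₀
    linarith [habs.2]
  have hmin' : -(c * deriv χ z₀ - g (χ z₀)) ≤ δ2 * ((K:ℝ) * gmax) / c ^ 2 := by
    rw [← hAlam]
    have hu' : ∀ t, HasDerivAt (fun t => -(δ2 * (deriv χ (z₀ + t) - deriv χ z₀)))
        (-(δ2 * deriv (deriv χ) (z₀ + t))) t := fun t => (hud z₀ t).neg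
    apply gronwall_aux hlampos hApos hu' (by simp)
      (fun t => by rw [abs_neg]; exact hubd z₀ t)
    intro t ht
    have habs := abs_le.mp (hgdiff z₀ t ht)
    have h1 := hueq t
    have h2 := hψ (z₀ + t)
    linarith [habs.1]
  rw [abs_le]
  constructor <;> linarith
end psi

section est
variable {n : ℕ} {g : ℝ → ℝ} {q : EuclideanSpace ℝ (Fin n)} {c : ℝ} {χ : ℝ → ℝ}
  {gmin gmax : ℝ} {K : NNReal}

lemma integral_inv_comp (hgcont : Continuous g) (hpos : ∀ y, 0 < g y)
    (hper : Function.Periodic g 1) (hc : IsCorrector g q c χ) :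
    ∫ z in (0:ℝ)..1, (g (χ z))⁻¹ * deriv χ z = ∫ s in (0:ℝ)..1, (g s)⁻¹ := by
  have hinv : Continuous fun y => (g y)⁻¹ := hgcont.inv₀ (fun y => (hpos y).ne')
  set H : ℝ → ℝ := fun y => ∫ s in (0:ℝ)..y, (g s)⁻¹ with hH
  have hHd : ∀ y : ℝ, HasDerivAt H (g y)⁻¹ y := fun y =>
    intervalIntegral.integral_hasDerivAt_right (hinv.intervalIntegrable _ _)
      (hinv.aestronglyMeasurable.stronglyMeasurableAtFilter) hinv.continuousAt
  have hcomp : ∀ z : ℝ, HasDerivAt (fun z => H (χ z)) ((g (χ z))⁻¹ * deriv χ z) z := by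
    intro z
    exact (hHd (χ z)).comp z ((chi_diff hc) z).hasDerivAt
  have hint : ∫ z in (0:ℝ)..1, (g (χ z))⁻¹ * deriv χ z = H (χ 1) - H (χ 0) :=
    intervalIntegral.integral_eq_sub_of_hasDerivAt (fun z _ => hcomp z)
      (((hinv.comp (chi_diff hc).continuous).mul (chi_d1_cont hc)).intervalIntegrable 0 1)
  rw [hint]
  have h1 : H (χ 1) - H (χ 0) = ∫ s in (χ 0)..(χ 1), (g s)⁻¹ :=
    intervalIntegral.integral_interval_sub_left (hinv.intervalIntegrable _ _)
      (hinv.intervalIntegrable _ _)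
  rw [h1]
  have hχ1 : χ 1 = χ 0 + 1 := by simpa using hc.2.2.1 0
  have hperinv : Function.Periodic (fun y => (g y)⁻¹) 1 := fun y => by simp [hper y]
  have h2 := hperinv.intervalIntegral_add_eq (χ 0) 0
  rw [hχ1]
  simpa using h2

lemma cI_bound (hg : LipschitzWith K g) (hper : Function.Periodic g 1) (hpos : ∀ y, 0 < g y)
    (hgmin : 0 < gmin) (hmin : ∀ y, gmin ≤ g y) (hmax : ∀ y, g y ≤ gmax)
    (hc : IsCorrector g q c χ) :
    |c * (∫ s in (0:ℝ)..1, (g s)⁻¹) - 1| ≤ ‖q‖ ^ 2 * ((K:ℝ) * gmax / gmin ^ 3) := by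
  obtain ⟨hcpos, hcmin, hcmax, hub, hlb⟩ := corrector_bounds hgmin hmin hmax hc
  have hgcont := hg.continuous
  have hgmax : 0 < gmax := lt_of_lt_of_le hgmin (le_trans (hmin 0) (hmax 0))
  have hinv : Continuous fun y => (g y)⁻¹ := hgcont.inv₀ (fun y => (hpos y).ne')
  have hcont1 : Continuous fun z => (g (χ z))⁻¹ * deriv χ z :=
    (hinv.comp (chi_diff hc).continuous).mul (chi_d1_cont hc)
  have hid : c * (∫ s in (0:ℝ)..1, (g s)⁻¹) - 1
      = ∫ z in (0:ℝ)..1, (g (χ z))⁻¹ * (c * deriv χ z - g (χ z)) := by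
    have heq : (fun z => (g (χ z))⁻¹ * (c * deriv χ z - g (χ z)))
        = fun z => c * ((g (χ z))⁻¹ * deriv χ z) - 1 := by
      funext z
      have h0 : g (χ z) ≠ 0 := (hpos (χ z)).ne'
      field_simp
    rw [heq, intervalIntegral.integral_sub (f := fun z => c * ((g (χ z))⁻¹ * deriv χ z)) (g := fun _ => (1:ℝ)) ((continuous_const.mul hcont1).intervalIntegrable 0 1)
      (intervalIntegrable_const), intervalIntegral.integral_const_mul,
      integral_inv_comp hgcont hpos hper hc]
    simp
  rw [hid]
  have hbd : ∀ z ∈ Set.uIoc (0:ℝ) 1,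
      ‖(g (χ z))⁻¹ * (c * deriv χ z - g (χ z))‖ ≤ gmin⁻¹ * (‖q‖ ^ 2 * ((K:ℝ) * gmax) / c ^ 2) := by
    intro z _
    rw [Real.norm_eq_abs, abs_mul]
    apply mul_le_mul _ (psi_bound hg hgmin hmin hmax hc z) (abs_nonneg _) (by positivity)
    rw [abs_of_pos (inv_pos.mpr (hpos (χ z)))]
    exact inv_anti₀ hgmin (hmin (χ z))
  have := intervalIntegral.norm_integral_le_of_norm_le_const hbd
  rw [Real.norm_eq_abs] at this
  simp only [sub_zero, abs_one, mul_one] at this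
  calc |∫ z in (0:ℝ)..1, (g (χ z))⁻¹ * (c * deriv χ z - g (χ z))|
      ≤ gmin⁻¹ * (‖q‖ ^ 2 * ((K:ℝ) * gmax) / c ^ 2) := by simpa using this
  _ ≤ ‖q‖ ^ 2 * ((K:ℝ) * gmax / gmin ^ 3) := by
      have h1 : gmin ^ 2 ≤ c ^ 2 := by nlinarith
      have h2 : ‖q‖ ^ 2 * ((K:ℝ) * gmax) / c ^ 2 ≤ ‖q‖ ^ 2 * ((K:ℝ) * gmax) / gmin ^ 2 := by
        apply div_le_div_of_nonneg_left (by positivity) (by positivity) h1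
      calc gmin⁻¹ * (‖q‖ ^ 2 * ((K:ℝ) * gmax) / c ^ 2)
          ≤ gmin⁻¹ * (‖q‖ ^ 2 * ((K:ℝ) * gmax) / gmin ^ 2) := by
            apply mul_le_mul_of_nonneg_left h2 (by positivity)
      _ = ‖q‖ ^ 2 * ((K:ℝ) * gmax / gmin ^ 3) := by
            rw [div_eq_mul_inv, div_eq_mul_inv]
            ring
end est

section est2
variable {n : ℕ} {g : ℝ → ℝ} {q : EuclideanSpace ℝ (Fin n)} {c : ℝ} {χ : ℝ → ℝ}
  {gmin gmax : ℝ} {K : NNReal}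

lemma chi_d1_integral_d2 (hc : IsCorrector g q c χ) (a b : ℝ) :
    ∫ s in a..b, deriv (deriv χ) s = deriv χ b - deriv χ a :=
  integral_deriv_eq_sub (fun x _ => (chi_d1 hc).differentiableAt)
    ((chi_d2_cont hc).intervalIntegrable a b)

lemma c_gbar_bound (hg : LipschitzWith K g) (hper : Function.Periodic g 1) (hpos : ∀ y, 0 < g y)
    (hgmin : 0 < gmin) (hmin : ∀ y, gmin ≤ g y) (hmax : ∀ y, g y ≤ gmax)
    (hc : IsCorrector g q c χ) (hq : q ≠ 0) :
    |c - ∫ s in (0:ℝ)..1, g s| ≤ 2 * (K:ℝ) * gmax / ‖q‖ ^ 2 := by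
  obtain ⟨hcpos, hcmin, hcmax, hub, hlb⟩ := corrector_bounds hgmin hmin hmax hc
  have hgcont := hg.continuous
  have hgmax : 0 < gmax := lt_of_lt_of_le hgmin (le_trans (hmin 0) (hmax 0))
  have hqn : 0 < ‖q‖ := norm_pos_iff.mpr hq
  have hδ2 : 0 < ‖q‖ ^ 2 := by positivity
  set δ2 := ‖q‖ ^ 2 with hδ2def
  set B := 2 * gmax / δ2 with hB
  have hBpos : 0 ≤ B := by positivity
  -- second derivative bound
  have h2d : ∀ w, |deriv (deriv χ) w| ≤ B := by
    intro w
    have heq := hc.2.2.2 w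
    rw [← hδ2def] at heq
    have h1 : deriv (deriv χ) w = (c * deriv χ w - g (χ w)) / δ2 := by
      field_simp
      linarith
    have hcub : c * deriv χ w ≤ gmax := (le_div_iff₀' hcpos).mp (hub w)
    have hcpos' : 0 < c * deriv χ w := mul_pos hcpos (hc.2.1 w)
    rw [h1, abs_div, abs_of_pos hδ2, hB]
    gcongr
    rw [abs_le]
    constructor <;> linarith [hmax (χ w), hpos (χ w)]
  -- first derivative close to 1 on [0,1]
  have hd1 : ∀ z ∈ Icc (0:ℝ) 1, ∀ s ∈ Icc (0:ℝ) 1, |deriv χ z - deriv χ s| ≤ B := by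
    intro z hz s hs
    have h1 : deriv χ z - deriv χ s = ∫ w in s..z, deriv (deriv χ) w :=
      (chi_d1_integral_d2 hc s z).symm
    rw [h1]
    have h2 := intervalIntegral.norm_integral_le_of_norm_le_const
      (C := B) (f := deriv (deriv χ)) (a := s) (b := z)
      (fun w _ => by rw [Real.norm_eq_abs]; exact h2d w)
    rw [Real.norm_eq_abs] at h2
    apply h2.trans
    rw [mem_Icc] at hz hs
    have : |z - s| ≤ 1 := by rw [abs_le]; constructor <;> linarith
    nlinarith
  have hd1' : ∀ z ∈ Icc (0:ℝ) 1, |deriv χ z - 1| ≤ B := by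
    intro z hz
    have h1 : deriv χ z - 1 = ∫ s in (0:ℝ)..1, (deriv χ z - deriv χ s) := by
      rw [intervalIntegral.integral_sub intervalIntegrable_const
        ((chi_d1_cont hc).intervalIntegrable 0 1), chi_integral_one hc]
      simp
    rw [h1]
    have h2 := intervalIntegral.norm_integral_le_of_norm_le_const
      (C := B) (f := fun s => deriv χ z - deriv χ s) (a := 0) (b := 1)
      (fun s hs => by
        rw [Real.norm_eq_abs]
        exact hd1 z hz s (mem_Icc.mpr ⟨(Set.mem_Ioc.mp (by simpa using hs)).1.le,
          (Set.mem_Ioc.mp (by simpa using hs)).2⟩))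
    rw [Real.norm_eq_abs] at h2
    simpa using h2
  -- χ close to affine
  have hchi : ∀ z ∈ Icc (0:ℝ) 1, |χ z - (χ 0 + z)| ≤ B := by
    intro z hz
    rw [mem_Icc] at hz
    have h1 : χ z - (χ 0 + z) = ∫ s in (0:ℝ)..z, (deriv χ s - 1) := by
      rw [intervalIntegral.integral_sub ((chi_d1_cont hc).intervalIntegrable 0 z)
        intervalIntegrable_const, chi_integral_deriv hc]
      simp
      ring
    rw [h1]
    have h2 := intervalIntegral.norm_integral_le_of_norm_le_const
      (C := B) (f := fun s => deriv χ s - 1) (a := 0) (b := z)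
      (fun s hs => by
        rw [Real.norm_eq_abs]
        have hs' : s ∈ Set.Ioc 0 z := by
          simpa [Set.uIoc_of_le hz.1] using hs
        exact hd1' s (mem_Icc.mpr ⟨hs'.1.le, hs'.2.trans hz.2⟩))
    rw [Real.norm_eq_abs] at h2
    apply h2.trans
    have : |z - 0| ≤ 1 := by rw [abs_le]; constructor <;> linarith
    nlinarith
  -- c = ∫ g(χ)
  have hgχcont : Continuous fun z => g (χ z) := hgcont.comp (chi_diff hc).continuous
  have hred : c = ∫ z in (0:ℝ)..1, g (χ z) := by
    have heq : (fun z => g (χ z)) = fun z => c * deriv χ z - δ2 * deriv (deriv χ) z := by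
      funext z
      have h := hc.2.2.2 z
      rw [← hδ2def] at h
      linarith
    rw [heq, intervalIntegral.integral_sub (f := fun z => c * deriv χ z) (g := fun z => δ2 * deriv (deriv χ) z) ((continuous_const.mul (chi_d1_cont hc)).intervalIntegrable 0 1)
      ((continuous_const.mul (chi_d2_cont hc)).intervalIntegrable 0 1),
      intervalIntegral.integral_const_mul, intervalIntegral.integral_const_mul,
      chi_integral_one hc, chi_d1_integral_d2 hc]
    have hperd : deriv χ 1 = deriv χ 0 := by simpa using chi_deriv_periodic hc 0
    rw [hperd]
    ring
  -- shift identity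
  have hshift : ∫ z in (0:ℝ)..1, g (χ 0 + z) = ∫ s in (0:ℝ)..1, g s := by
    rw [intervalIntegral.integral_comp_add_left g (χ 0)]
    have h2 := hper.intervalIntegral_add_eq (χ 0) 0
    simpa using h2
  have hint2 : IntervalIntegrable (fun z : ℝ => g (χ 0 + z)) MeasureTheory.volume 0 1 := by
    apply Continuous.intervalIntegrable
    exact hgcont.comp (continuous_const.add continuous_id)
  have hfinal : c - ∫ s in (0:ℝ)..1, g s = ∫ z in (0:ℝ)..1, (g (χ z) - g (χ 0 + z)) := by
    rw [intervalIntegral.integral_sub (hgχcont.intervalIntegrable 0 1) hint2, hshift, ← hred]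
  rw [hfinal]
  have h2 := intervalIntegral.norm_integral_le_of_norm_le_const
    (C := (K:ℝ) * B) (f := fun z => g (χ z) - g (χ 0 + z)) (a := 0) (b := 1)
    (fun z hz => by
      rw [Real.norm_eq_abs]
      have hz' : z ∈ Icc (0:ℝ) 1 := by
        have := Set.mem_Ioc.mp (by simpa using hz)
        exact mem_Icc.mpr ⟨this.1.le, this.2⟩
      calc |g (χ z) - g (χ 0 + z)| ≤ (K:ℝ) * |χ z - (χ 0 + z)| := lip_real hg _ _
      _ ≤ (K:ℝ) * B := mul_le_mul_of_nonneg_left (hchi z hz') K.coe_nonneg)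
  rw [Real.norm_eq_abs] at h2
  apply (by simpa using h2 : |∫ z in (0:ℝ)..1, (g (χ z) - g (χ 0 + z))| ≤ (K:ℝ) * B).trans
  apply le_of_eq
  rw [hB]
  ring
end est2

/-- The scaled cell problem `ε^{α−1}|p|²χ'' − cχ' + g(χ) = 0` is equivalent to the
corrector equation for `(ε^{(α−1)/2} p, c)`; hence `c_α^ε(|p|) = c̄(ε^{(α−1)/2}|p|)`,
with the stated limits as `ε → 0⁺`. -/
theorem statement_11 {n : ℕ} (g : ℝ → ℝ) (hg : ∃ K, LipschitzWith K g)
    (hper : ∀ y, g (y + 1) = g y) (hpos : ∀ y, 0 < g y)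
    (α : ℝ) (hα0 : 0 ≤ α) (hα1 : α ≠ 1)
    (cbar : EuclideanSpace ℝ (Fin n) → ℝ)
    (hcorr : ∀ q : EuclideanSpace ℝ (Fin n), ∃ χ, IsCorrector g q (cbar q) χ)
    (hinv : ∀ q q' : EuclideanSpace ℝ (Fin n), ‖q‖ = ‖q'‖ → cbar q = cbar q') :
    (∀ ε : ℝ, 0 < ε → ∀ (p : EuclideanSpace ℝ (Fin n)) (c : ℝ) (χ : ℝ → ℝ),
      (ContDiff ℝ 2 χ ∧ (∀ z, 0 < deriv χ z) ∧ (∀ z, χ (z + 1) = χ z + 1) ∧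
        ∀ z, ε ^ (α - 1) * ‖p‖ ^ 2 * deriv (deriv χ) z - c * deriv χ z + g (χ z) = 0) ↔
      IsCorrector g ((ε ^ ((α - 1) / 2)) • p) c χ) ∧
    (1 < α → ∀ p : EuclideanSpace ℝ (Fin n),
      Tendsto (fun ε : ℝ => cbar ((ε ^ ((α - 1) / 2)) • p)) (𝓝[>] (0:ℝ))
        (𝓝 ((∫ s in (0:ℝ)..1, (g s)⁻¹)⁻¹))) ∧
    (α < 1 → ∀ p : EuclideanSpace ℝ (Fin n), p ≠ 0 →
      Tendsto (fun ε : ℝ => cbar ((ε ^ ((α - 1) / 2)) • p)) (𝓝[>] (0:ℝ))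
        (𝓝 (∫ s in (0:ℝ)..1, g s))) ∧
    cbar 0 = (∫ s in (0:ℝ)..1, (g s)⁻¹)⁻¹ := by
  obtain ⟨K, hK⟩ := hg
  have hperiodic : Function.Periodic g 1 := hper
  obtain ⟨gmin, gmax, hgmin, hmin, hmax⟩ := exists_min_max hK.continuous hperiodic hpos
  set I := ∫ s in (0:ℝ)..1, (g s)⁻¹ with hIdef
  have hIpos : 0 < I := by
    apply intervalIntegral.intervalIntegral_pos_of_pos_on
      ((hK.continuous.inv₀ (fun y => (hpos y).ne')).intervalIntegrable 0 1)
      (fun x _ => inv_pos.mpr (hpos x)) zero_lt_one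
  have hIne : I ≠ 0 := ne_of_gt hIpos
  -- squared norm identity
  have hnorm : ∀ ε : ℝ, 0 < ε → ∀ p : EuclideanSpace ℝ (Fin n),
      ‖(ε ^ ((α - 1) / 2)) • p‖ ^ 2 = ε ^ (α - 1) * ‖p‖ ^ 2 := by
    intro ε hε p
    have h1 : 0 < ε ^ ((α - 1) / 2) := Real.rpow_pos_of_pos hε _
    rw [norm_smul, Real.norm_eq_abs, abs_of_pos h1, mul_pow]
    congr 1
    rw [sq, ← Real.rpow_add hε]
    congr 1
    ring
  -- part 4 : cbar 0
  have hcbar0 : cbar 0 = I⁻¹ := by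
    obtain ⟨χ, hχ⟩ := hcorr 0
    have h1 := cI_bound hK hperiodic hpos hgmin hmin hmax hχ
    rw [norm_zero] at h1
    simp only [ne_eq, OfNat.ofNat_ne_zero, not_false_eq_true, zero_pow, zero_mul] at h1
    have h2 : cbar 0 * I - 1 = 0 := by
      have := abs_nonpos_iff.mp h1
      exact this
    have h3 : cbar 0 * I = 1 := by linarith
    field_simp
    linarith [mul_comm (cbar 0) I]
  refine ⟨?_, ?_, ?_, hcbar0⟩
  · -- equivalence
    intro ε hε p c χ
    have h := hnorm ε hε p
    unfold IsCorrector
    rw [h]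
  · -- α > 1
    intro hα p
    rw [← tendsto_sub_nhds_zero_iff]
    apply squeeze_zero_norm'
      (a := fun ε => (((K:ℝ) * gmax / gmin ^ 3) * ‖p‖ ^ 2 / I) * ε ^ (α - 1))
    · filter_upwards [self_mem_nhdsWithin] with ε hε
      have hε' : (0:ℝ) < ε := hε
      set q := (ε ^ ((α - 1) / 2)) • p with hq
      obtain ⟨χ, hχ⟩ := hcorr q
      have h1 := cI_bound hK hperiodic hpos hgmin hmin hmax hχ
      rw [hnorm ε hε' p] at h1
      rw [Real.norm_eq_abs]
      have he : cbar q - I⁻¹ = (cbar q * I - 1) / I := by field_simp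
      rw [he, abs_div, abs_of_pos hIpos]
      calc |cbar q * I - 1| / I
          ≤ (ε ^ (α - 1) * ‖p‖ ^ 2 * ((K:ℝ) * gmax / gmin ^ 3)) / I := by gcongr
      _ = (((K:ℝ) * gmax / gmin ^ 3) * ‖p‖ ^ 2 / I) * ε ^ (α - 1) := by ring
    · have hc : ContinuousAt (fun x : ℝ => x ^ (α - 1)) 0 :=
        Real.continuousAt_rpow_const 0 (α - 1) (Or.inr (by linarith))
      have h3 := (hc.tendsto.mono_left (nhdsWithin_le_nhds (s := Set.Ioi (0:ℝ)))).const_mul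
        (((K:ℝ) * gmax / gmin ^ 3) * ‖p‖ ^ 2 / I)
      rw [Real.zero_rpow (by intro h; apply hα1; linarith [sub_eq_zero.mp h] : α - 1 ≠ 0),
        mul_zero] at h3
      exact h3
  · -- α < 1
    intro hα p hp
    rw [← tendsto_sub_nhds_zero_iff]
    apply squeeze_zero_norm'
      (a := fun ε => (2 * (K:ℝ) * gmax / ‖p‖ ^ 2) * ε ^ (1 - α))
    · filter_upwards [self_mem_nhdsWithin] with ε hε
      have hε' : (0:ℝ) < ε := hε
      set q := (ε ^ ((α - 1) / 2)) • p with hq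
      have hq0 : q ≠ 0 := smul_ne_zero (ne_of_gt (Real.rpow_pos_of_pos hε' _)) hp
      obtain ⟨χ, hχ⟩ := hcorr q
      have h1 := c_gbar_bound hK hperiodic hpos hgmin hmin hmax hχ hq0
      rw [hnorm ε hε' p] at h1
      rw [Real.norm_eq_abs]
      apply h1.trans
      apply le_of_eq
      have hpn : (0:ℝ) < ‖p‖ ^ 2 := by
        have : ‖p‖ ≠ 0 := norm_ne_zero_iff.mpr hp
        positivity
      have hinvpow : (ε ^ (α - 1))⁻¹ = ε ^ (1 - α) := by
        rw [← Real.rpow_neg hε'.le]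
        congr 1
        ring
      rw [div_eq_mul_inv, div_eq_mul_inv, mul_inv, hinvpow]
      ring
    · have hc : ContinuousAt (fun x : ℝ => x ^ (1 - α)) 0 :=
        Real.continuousAt_rpow_const 0 (1 - α) (Or.inr (by linarith))
      have h3 := (hc.tendsto.mono_left (nhdsWithin_le_nhds (s := Set.Ioi (0:ℝ)))).const_mul
        (2 * (K:ℝ) * gmax / ‖p‖ ^ 2)
      rw [Real.zero_rpow (by intro h; apply hα1; linarith [sub_eq_zero.mp h] : (1:ℝ) - α ≠ 0),
        mul_zero] at h3
      exact h3
end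
end
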